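/- arXiv:0808.2614 — 7 statements merged into one kernel-verified Lean document; each statement's English description precedes it below -/
import Mathlib

section
/- For every integer ℓ with 1 ≤ ℓ ≤ n and all x, y ∈ ℝⁿ with x ≠ y, all integrals below converge and G_ℓ(x,y) = Σ_{k=0}^{ℓ−1} binom(ℓ−1, k) · |x−y|^{k−n} · ∫₀^∞ r^{n−k−1} θ(x + r·(x−y)/|x−y|) dr, where binom(ℓ−1,k) denotes the binomial coefficient. In particular G_ℓ(x,y) also equals ∫₀^∞ τ^{n−ℓ}(τ+1)^{ℓ−1} θ(x + τ(x−y)) dτ. -/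
open MeasureTheory Set

noncomputable section

/-- The kernel `G_m(x,y) = ∫₁^∞ (t−1)^{n−m} t^{m−1} θ(y + t(x−y)) dt`. -/
def Gker {n : ℕ} (θ : EuclideanSpace ℝ (Fin n) → ℝ) (m : ℕ)
    (x y : EuclideanSpace ℝ (Fin n)) : ℝ :=
  ∫ t in Set.Ioi (1 : ℝ), (t - 1) ^ (n - m) * t ^ (m - 1) * θ (y + t • (x - y))

/-- A continuous compactly supported function along a (nondegenerate) line, times a
continuous function, is integrable on `ℝ`. -/
lemma aux_integrable {n : ℕ} (θ : EuclideanSpace ℝ (Fin n) → ℝ)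
    (hθ : Continuous θ) (hθc : HasCompactSupport θ)
    (p v : EuclideanSpace ℝ (Fin n)) (hv : v ≠ 0) (P : ℝ → ℝ) (hP : Continuous P) :
    Integrable (fun t : ℝ => P t * θ (p + t • v)) := by
  have hline : Topology.IsClosedEmbedding (fun t : ℝ => p + t • v) := by
    have h1 : Topology.IsClosedEmbedding (fun t : ℝ => t • v) :=
      isClosedEmbedding_smul_left hv
    have h2 : Topology.IsClosedEmbedding (fun w : EuclideanSpace ℝ (Fin n) => p + w) :=
      (Homeomorph.addLeft p).isClosedEmbedding
    exact h2.comp h1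
  have hcs : HasCompactSupport (fun t : ℝ => θ (p + t • v)) :=
    hθc.comp_isClosedEmbedding hline
  have hcont : Continuous (fun t : ℝ => θ (p + t • v)) :=
    hθ.comp hline.continuous
  have : HasCompactSupport (fun t : ℝ => P t * θ (p + t • v)) := hcs.mul_left
  exact (hP.mul hcont).integrable_of_hasCompactSupport this

theorem stmt0 {n : ℕ} (hn : 1 ≤ n) (θ : EuclideanSpace ℝ (Fin n) → ℝ)
    (hθ : ContDiff ℝ (⊤ : ℕ∞) θ) (hθc : HasCompactSupport θ)
    (ℓ : ℕ) (hℓ1 : 1 ≤ ℓ) (hℓn : ℓ ≤ n)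
    (x y : EuclideanSpace ℝ (Fin n)) (hxy : x ≠ y) :
    (IntegrableOn (fun t : ℝ => (t - 1) ^ (n - ℓ) * t ^ (ℓ - 1) * θ (y + t • (x - y)))
        (Set.Ioi 1)) ∧
    (∀ k ∈ Finset.range ℓ,
      IntegrableOn
        (fun r : ℝ => r ^ (n - k - 1) * θ (x + (r / ‖x - y‖) • (x - y))) (Set.Ioi 0)) ∧
    (IntegrableOn (fun τ : ℝ => τ ^ (n - ℓ) * (τ + 1) ^ (ℓ - 1) * θ (x + τ • (x - y)))
        (Set.Ioi 0)) ∧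
    (Gker θ ℓ x y =
      ∑ k ∈ Finset.range ℓ,
        (Nat.choose (ℓ - 1) k : ℝ) * ‖x - y‖ ^ ((k : ℤ) - (n : ℤ)) *
          ∫ r in Set.Ioi (0 : ℝ), r ^ (n - k - 1) * θ (x + (r / ‖x - y‖) • (x - y))) ∧
    (Gker θ ℓ x y =
      ∫ τ in Set.Ioi (0 : ℝ), τ ^ (n - ℓ) * (τ + 1) ^ (ℓ - 1) * θ (x + τ • (x - y))) := by
  have hθcont : Continuous θ := hθ.continuous
  have hv : x - y ≠ 0 := sub_ne_zero.mpr hxy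
  set c : ℝ := ‖x - y‖ with hcdef
  have hc : 0 < c := norm_pos_iff.mpr hv
  -- basic integrability facts
  have hI1 : Integrable (fun t : ℝ => (t - 1) ^ (n - ℓ) * t ^ (ℓ - 1) * θ (y + t • (x - y))) :=
    aux_integrable θ hθcont hθc y (x - y) hv (fun t => (t - 1) ^ (n - ℓ) * t ^ (ℓ - 1))
      (by fun_prop)
  have hv' : c⁻¹ • (x - y) ≠ 0 := smul_ne_zero (inv_ne_zero hc.ne') hv
  have hdiv : ∀ r : ℝ, x + (r / c) • (x - y) = x + r • (c⁻¹ • (x - y)) := by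
    intro r
    rw [div_eq_mul_inv, mul_smul]
  have hI2 : ∀ m : ℕ, Integrable (fun r : ℝ => r ^ m * θ (x + (r / c) • (x - y))) := by
    intro m
    have := aux_integrable θ hθcont hθc x (c⁻¹ • (x - y)) hv' (fun r => r ^ m) (by fun_prop)
    refine this.congr ?_
    filter_upwards with r
    rw [hdiv]
  have hI3 : ∀ (P : ℝ → ℝ), Continuous P →
      Integrable (fun τ : ℝ => P τ * θ (x + τ • (x - y))) := fun P hP =>
    aux_integrable θ hθcont hθc x (x - y) hv P hP
  refine ⟨hI1.integrableOn, fun k _ => (hI2 (n - k - 1)).integrableOn,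
    (hI3 (fun τ => τ ^ (n - ℓ) * (τ + 1) ^ (ℓ - 1)) (by fun_prop)).integrableOn, ?_, ?_⟩
  -- the shift identity (proved first)
  · have hshift : Gker θ ℓ x y =
        ∫ τ in Set.Ioi (0 : ℝ), τ ^ (n - ℓ) * (τ + 1) ^ (ℓ - 1) * θ (x + τ • (x - y)) := by
      unfold Gker
      have hmp : MeasurePreserving (fun τ : ℝ => τ + 1) volume volume :=
        measurePreserving_add_right volume 1
      have hemb : MeasurableEmbedding (fun τ : ℝ => τ + 1) :=
        (Homeomorph.addRight (1 : ℝ)).measurableEmbedding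
      have hpre : (fun τ : ℝ => τ + 1) ⁻¹' Set.Ioi 1 = Set.Ioi 0 := by
        ext τ; simp
      rw [← hmp.setIntegral_preimage_emb hemb
        (fun t => (t - 1) ^ (n - ℓ) * t ^ (ℓ - 1) * θ (y + t • (x - y))) (Set.Ioi 1), hpre]
      refine setIntegral_congr_fun measurableSet_Ioi fun τ _ => ?_
      have hvec : y + (τ + 1) • (x - y) = x + τ • (x - y) := by
        rw [add_smul, one_smul]
        abel
      rw [hvec]
      ring_nf
    rw [hshift]
    -- expand the binomial
    have hexp : ∀ τ : ℝ, τ ^ (n - ℓ) * (τ + 1) ^ (ℓ - 1) * θ (x + τ • (x - y)) =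
        ∑ j ∈ Finset.range ℓ,
          (Nat.choose (ℓ - 1) j : ℝ) * (τ ^ (n - ℓ + j) * θ (x + τ • (x - y))) := by
      intro τ
      have hpow : (τ + 1) ^ (ℓ - 1) =
          ∑ j ∈ Finset.range ℓ, τ ^ j * 1 ^ (ℓ - 1 - j) * (Nat.choose (ℓ - 1) j : ℝ) := by
        have h' : ℓ - 1 + 1 = ℓ := Nat.sub_add_cancel hℓ1
        rw [add_pow, h']
      rw [hpow, Finset.mul_sum, Finset.sum_mul]
      refine Finset.sum_congr rfl fun j _ => ?_
      rw [pow_add]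
      ring
    rw [setIntegral_congr_fun measurableSet_Ioi fun τ _ => hexp τ]
    rw [integral_finset_sum _ (fun j _ =>
      ((hI3 (fun τ => (Nat.choose (ℓ - 1) j : ℝ) * τ ^ (n - ℓ + j)) (by fun_prop)).congr
        (by filter_upwards with τ; ring)).integrableOn)]
    -- reflect the sum
    rw [← Finset.sum_range_reflect]
    refine Finset.sum_congr rfl fun k hk => ?_
    have hkℓ : k < ℓ := Finset.mem_range.mp hk
    have hchoose : (Nat.choose (ℓ - 1) (ℓ - 1 - k) : ℝ) = (Nat.choose (ℓ - 1) k : ℝ) := by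
      norm_cast
      exact Nat.choose_symm (by omega)
    have hexp2 : n - ℓ + (ℓ - 1 - k) = n - k - 1 := by omega
    rw [integral_const_mul, hchoose, hexp2, mul_assoc]
    congr 1
    -- scaling identity: ∫ τ^(n-k-1) θ(x+τ•(x-y)) = c^(k-n) ∫ r^(n-k-1) θ(x+(r/c)•(x-y))
    set m : ℕ := n - k - 1 with hm
    have hscale : (∫ r in Set.Ioi (0 : ℝ), r ^ m * θ (x + (r / c) • (x - y))) =
        c ^ (m + 1) * ∫ τ in Set.Ioi (0 : ℝ), τ ^ m * θ (x + τ • (x - y)) := by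
      have := integral_comp_mul_right_Ioi
        (fun r => r ^ m * θ (x + (r / c) • (x - y))) 0 hc
      simp only [zero_mul, smul_eq_mul] at this
      have heq : ∀ τ : ℝ, (τ * c) ^ m * θ (x + (τ * c / c) • (x - y)) =
          c ^ m * (τ ^ m * θ (x + τ • (x - y))) := by
        intro τ
        rw [mul_div_cancel_right₀ _ hc.ne', mul_pow]
        ring
      rw [setIntegral_congr_fun measurableSet_Ioi (fun τ _ => heq τ),
        integral_const_mul] at this
      calc (∫ r in Set.Ioi (0:ℝ), r ^ m * θ (x + (r / c) • (x - y)))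
          = c * (c⁻¹ * ∫ r in Set.Ioi (0:ℝ), r ^ m * θ (x + (r / c) • (x - y))) := by
            rw [← mul_assoc, mul_inv_cancel₀ hc.ne', one_mul]
        _ = c * (c ^ m * ∫ τ in Set.Ioi (0:ℝ), τ ^ m * θ (x + τ • (x - y))) := by rw [← this]
        _ = c ^ (m + 1) * ∫ τ in Set.Ioi (0:ℝ), τ ^ m * θ (x + τ • (x - y)) := by
            rw [pow_succ]; ring
    rw [hscale]
    have hzpow : (c : ℝ) ^ ((k : ℤ) - (n : ℤ)) = (c ^ (m + 1))⁻¹ := by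
      have h1 : ((k : ℤ) - (n : ℤ)) = -((m : ℤ) + 1) := by
        have : (m : ℤ) = (n : ℤ) - k - 1 := by
          rw [hm]; push_cast [Nat.cast_sub (by omega : k + 1 ≤ n)]; omega
        omega
      rw [h1, zpow_neg]
      norm_cast
    rw [hzpow, ← mul_assoc, inv_mul_cancel₀ (by positivity), one_mul]
  · -- the shift identity again
    unfold Gker
    have hmp : MeasurePreserving (fun τ : ℝ => τ + 1) volume volume :=
      measurePreserving_add_right volume 1
    have hemb : MeasurableEmbedding (fun τ : ℝ => τ + 1) :=
      (Homeomorph.addRight (1 : ℝ)).measurableEmbedding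
    have hpre : (fun τ : ℝ => τ + 1) ⁻¹' Set.Ioi 1 = Set.Ioi 0 := by
      ext τ; simp
    rw [← hmp.setIntegral_preimage_emb hemb
      (fun t => (t - 1) ^ (n - ℓ) * t ^ (ℓ - 1) * θ (y + t • (x - y))) (Set.Ioi 1), hpre]
    refine setIntegral_congr_fun measurableSet_Ioi fun τ _ => ?_
    have hvec : y + (τ + 1) • (x - y) = x + τ • (x - y) := by
      rw [add_smul, one_smul]
      abel
    rw [hvec]
    ring_nf

end
end

section
/- Let 1 ≤ ℓ ≤ n, let j ∈ {1,…,n}, let f : ℝⁿ → ℝ be bounded and continuous, and let x ∈ ℝⁿ. Then both of the following integrals converge absolutely and are equal: ∫_{ℝⁿ} [∫₁^∞ (t−1)^{ℓ−1} t^{n−ℓ} θ(x + t(y−x)) dt] (x_j − y_j) f(y) dy = ∫_{ℝⁿ} θ(a) (x_j − a_j) [∫₀¹ t^{ℓ−1} f(a + t(x−a)) dt] da. (The inner kernel on the left is G_{n−ℓ+1}(y,x), so this identifies the Poincaré-type operator with its regularized path-integral form.) -/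
open MeasureTheory Set

noncomputable section

private lemma coord_abs_le {n : ℕ} {j : Fin n} (v : EuclideanSpace ℝ (Fin n)) : |v j| ≤ ‖v‖ := by
  rw [EuclideanSpace.norm_eq]
  rw [show |v j| = Real.sqrt (‖v j‖ ^ 2) by rw [Real.sqrt_sq_eq_abs]; simp]
  exact Real.sqrt_le_sqrt <|
    Finset.single_le_sum (f := fun i => ‖v i‖ ^ 2) (fun i _ => sq_nonneg _) (Finset.mem_univ j)

private lemma image_inv_Ioo : (fun s : ℝ => s⁻¹) '' Ioo 0 1 = Ioi 1 := by
  ext t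
  constructor
  · rintro ⟨s, ⟨hs0, hs1⟩, rfl⟩
    exact (one_lt_inv₀ hs0).2 hs1
  · intro ht
    have ht' : (0:ℝ) < t := lt_trans one_pos ht
    exact ⟨t⁻¹, ⟨inv_pos.2 ht', (inv_lt_one₀ ht').2 ht⟩, inv_inv t⟩

set_option maxHeartbeats 2000000 in
theorem stmt2 {n : ℕ} (hn : 1 ≤ n) (θ : EuclideanSpace ℝ (Fin n) → ℝ)
    (hθ : ContDiff ℝ (⊤ : ℕ∞) θ) (hθc : HasCompactSupport θ)
    (ℓ : ℕ) (hℓ1 : 1 ≤ ℓ) (hℓn : ℓ ≤ n) (j : Fin n)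
    (f : EuclideanSpace ℝ (Fin n) → ℝ) (hf : Continuous f)
    (M : ℝ) (hfM : ∀ y, |f y| ≤ M) (x : EuclideanSpace ℝ (Fin n)) :
    (Integrable (fun y : EuclideanSpace ℝ (Fin n) =>
        (∫ t in Set.Ioi (1 : ℝ), (t - 1) ^ (ℓ - 1) * t ^ (n - ℓ) * θ (x + t • (y - x))) *
          (x j - y j) * f y)) ∧
    (Integrable (fun a : EuclideanSpace ℝ (Fin n) =>
        θ a * (x j - a j) * ∫ t in (0 : ℝ)..1, t ^ (ℓ - 1) * f (a + t • (x - a)))) ∧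
    ((∫ y : EuclideanSpace ℝ (Fin n),
        (∫ t in Set.Ioi (1 : ℝ), (t - 1) ^ (ℓ - 1) * t ^ (n - ℓ) * θ (x + t • (y - x))) *
          (x j - y j) * f y) =
      ∫ a : EuclideanSpace ℝ (Fin n),
        θ a * (x j - a j) * ∫ t in (0 : ℝ)..1, t ^ (ℓ - 1) * f (a + t • (x - a))) := by
  classical
  obtain ⟨C, hC⟩ := (hθ.continuous).bounded_above_of_compact_support hθc
  have hC0 : 0 ≤ C := le_trans (norm_nonneg _) (hC 0)
  have hM0 : 0 ≤ M := le_trans (abs_nonneg _) (hfM 0)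
  obtain ⟨R0, hR0⟩ := hθc.isBounded.subset_closedBall (0 : EuclideanSpace ℝ (Fin n))
  set R : ℝ := max R0 0 with hRdef
  have hR : tsupport θ ⊆ Metric.closedBall 0 R :=
    hR0.trans (Metric.closedBall_subset_closedBall (le_max_left _ _))
  have hR0' : (0:ℝ) ≤ R := le_max_right _ _
  set K : ℝ := R + ‖x‖ with hKdef
  have hK0 : 0 ≤ K := add_nonneg hR0' (norm_nonneg _)
  set V : ℝ := (volume (Metric.ball (0:EuclideanSpace ℝ (Fin n)) 1)).toReal with hVdef
  have hV0 : 0 ≤ V := ENNReal.toReal_nonneg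
  set g : ℝ → EuclideanSpace ℝ (Fin n) → ℝ := fun t y =>
    ((t - 1) ^ (ℓ - 1) * t ^ (n - ℓ) * θ (x + t • (y - x))) * ((x j - y j) * f y) with hg
  have hgc : Continuous (fun p : ℝ × EuclideanSpace ℝ (Fin n) => g p.1 p.2) := by
    apply Continuous.mul
    · exact ((by fun_prop : Continuous fun p : ℝ × EuclideanSpace ℝ (Fin n) =>
        (p.1 - 1) ^ (ℓ - 1) * p.1 ^ (n - ℓ))).mul
        (hθ.continuous.comp (by fun_prop))
    · exact ((continuous_const.sub ((EuclideanSpace.proj j).continuous.comp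
        continuous_snd)).mul (hf.comp continuous_snd))
  have hsupp : ∀ t : ℝ, 1 ≤ t → ∀ y : EuclideanSpace ℝ (Fin n),
      θ (x + t • (y - x)) ≠ 0 → ‖y - x‖ ≤ K / t := by
    intro t ht y hy
    have ht0 : (0:ℝ) < t := lt_of_lt_of_le one_pos ht
    have hz : x + t • (y - x) ∈ tsupport θ := subset_tsupport θ hy
    have hz' : ‖x + t • (y - x)‖ ≤ R := by
      simpa [Metric.mem_closedBall, dist_eq_norm] using hR hz
    have h2 : ‖t • (y - x)‖ ≤ R + ‖x‖ := by
      calc ‖t • (y - x)‖ = ‖x + t • (y - x) - x‖ := by rw [add_sub_cancel_left]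
        _ ≤ ‖x + t • (y - x)‖ + ‖x‖ := norm_sub_le _ _
        _ ≤ R + ‖x‖ := by linarith
    rw [norm_smul, Real.norm_eq_abs, abs_of_pos ht0] at h2
    rw [le_div_iff₀ ht0, mul_comm]
    exact h2
  -- slices integrable
  have hslice : ∀ t : ℝ, 1 ≤ t → Integrable (g t) volume := by
    intro t ht
    have hcont : Continuous (g t) := hgc.comp (continuous_const.prodMk continuous_id)
    have hcs : HasCompactSupport (g t) := by
      apply HasCompactSupport.intro (isCompact_closedBall x (K / t))
      intro y hy
      by_cases h : θ (x + t • (y - x)) = 0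
      · simp [hg, h]
      · exact absurd (Metric.mem_closedBall.2
          (by rw [dist_eq_norm]; exact hsupp t ht y h)) hy
    exact hcont.integrable_of_hasCompactSupport hcs
  -- pointwise bound on g
  have hgb : ∀ t : ℝ, 1 ≤ t → ∀ y : EuclideanSpace ℝ (Fin n),
      ‖g t y‖ ≤ Set.indicator (Metric.closedBall x (K / t))
        (fun _ => (t - 1) ^ (ℓ - 1) * t ^ (n - ℓ) * C * ((K / t) * M)) y := by
    intro t ht y
    have ht0 : (0:ℝ) < t := lt_of_lt_of_le one_pos ht
    have hKt : 0 ≤ K / t := div_nonneg hK0 ht0.le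
    by_cases hy : θ (x + t • (y - x)) = 0
    · simp only [hg, hy, mul_zero, zero_mul, norm_zero]
      apply Set.indicator_apply_nonneg
      intro _
      have h1 : (0:ℝ) ≤ t - 1 := by linarith
      positivity
    · have hmem : y ∈ Metric.closedBall x (K / t) := by
        rw [Metric.mem_closedBall, dist_eq_norm]
        exact hsupp t ht y hy
      rw [Set.indicator_of_mem hmem]
      have h2 : |x j - y j| ≤ K / t := by
        have h3 := coord_abs_le (j := j) (x - y)
        have h4 : (x - y) j = x j - y j := rfl
        rw [h4] at h3
        calc |x j - y j| ≤ ‖x - y‖ := h3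
          _ = ‖y - x‖ := norm_sub_rev _ _
          _ ≤ K / t := hsupp t ht y hy
      have h1 : |t - 1| = t - 1 := abs_of_nonneg (by linarith)
      simp only [hg, Real.norm_eq_abs, abs_mul, abs_pow, h1, abs_of_pos ht0]
      have hθb : |θ (x + t • (y - x))| ≤ C := (Real.norm_eq_abs _) ▸ hC _
      have hfb : |f y| ≤ M := hfM y
      have h5 : (0:ℝ) ≤ t - 1 := by linarith
      gcongr (t - 1) ^ (ℓ - 1) * t ^ (n - ℓ) * ?_ * (?_ * ?_) <;>
        first
          | exact hθb
          | exact h2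
          | exact hfb
          | positivity
  -- integral norm bound
  set c0 : ℝ := C * M * V * K ^ (n + 1) with hc0def
  have hpow : ∀ t : ℝ, t ^ (ℓ - 1) * t ^ (n - ℓ) = t ^ (n - 1) := by
    intro t; rw [← pow_add]; congr 1; omega
  have hDbound : ∀ t : ℝ, 1 < t → (∫ y, ‖g t y‖) ≤ c0 * (t ^ 2)⁻¹ := by
    intro t ht
    have ht0 : (0:ℝ) < t := lt_trans one_pos ht
    have hKt : 0 ≤ K / t := div_nonneg hK0 ht0.le
    have hind : Integrable (Set.indicator (Metric.closedBall x (K / t))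
        (fun _ => (t - 1) ^ (ℓ - 1) * t ^ (n - ℓ) * C * ((K / t) * M))) volume := by
      rw [integrable_indicator_iff measurableSet_closedBall]
      exact integrableOn_const measure_closedBall_lt_top.ne enorm_ne_top
    have step1 : (∫ y, ‖g t y‖) ≤ ∫ y, Set.indicator (Metric.closedBall x (K / t))
        (fun _ => (t - 1) ^ (ℓ - 1) * t ^ (n - ℓ) * C * ((K / t) * M)) y :=
      integral_mono ((hslice t ht.le).norm) hind (hgb t ht.le)
    have step2 : (∫ y : EuclideanSpace ℝ (Fin n), Set.indicator (Metric.closedBall x (K / t))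
        (fun _ => (t - 1) ^ (ℓ - 1) * t ^ (n - ℓ) * C * ((K / t) * M)) y)
        = ((K / t) ^ n * V) * ((t - 1) ^ (ℓ - 1) * t ^ (n - ℓ) * C * ((K / t) * M)) := by
      rw [integral_indicator_const _ measurableSet_closedBall]
      rw [measureReal_def, Measure.addHaar_closedBall _ _ hKt]
      rw [smul_eq_mul, ENNReal.toReal_mul, ENNReal.toReal_ofReal (by positivity)]
      rw [finrank_euclideanSpace_fin]
    have step3 : ((K / t) ^ n * V) * ((t - 1) ^ (ℓ - 1) * t ^ (n - ℓ) * C * ((K / t) * M))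
        ≤ c0 * (t ^ 2)⁻¹ := by
      have h1 : (t - 1) ^ (ℓ - 1) ≤ t ^ (ℓ - 1) :=
        pow_le_pow_left₀ (by linarith) (by linarith) _
      have key : ((K / t) ^ n * V) * (t ^ (ℓ - 1) * t ^ (n - ℓ) * C * ((K / t) * M))
          = c0 * (t ^ 2)⁻¹ := by
        have ht0' : t ≠ 0 := ne_of_gt ht0
        have e3 : t ^ (n - 1) * ((t ^ n)⁻¹ * t⁻¹) = (t ^ 2)⁻¹ := by
          rw [← mul_inv, ← pow_succ]
          rw [show n + 1 = (n - 1) + 2 by omega, pow_add, mul_inv, ← mul_assoc,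
            mul_inv_cancel₀ (pow_ne_zero _ ht0'), one_mul]
        rw [hpow, div_pow]
        calc K ^ n / t ^ n * V * (t ^ (n - 1) * C * (K / t * M))
            = (K ^ (n + 1) * (C * M * V)) * (t ^ (n - 1) * ((t ^ n)⁻¹ * t⁻¹)) := by
              rw [pow_succ]; ring
          _ = c0 * (t ^ 2)⁻¹ := by rw [e3, hc0def]; ring
      calc ((K / t) ^ n * V) * ((t - 1) ^ (ℓ - 1) * t ^ (n - ℓ) * C * ((K / t) * M))
          ≤ ((K / t) ^ n * V) * (t ^ (ℓ - 1) * t ^ (n - ℓ) * C * ((K / t) * M)) := by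
            gcongr
        _ = c0 * (t ^ 2)⁻¹ := key
    linarith
  -- the dominating function is integrable on Ioi 1
  have hD : Integrable (fun t : ℝ => c0 * (t ^ 2)⁻¹) (volume.restrict (Ioi 1)) := by
    have h1 : IntegrableOn (fun t : ℝ => t ^ (-2 : ℝ)) (Ioi 1) volume :=
      integrableOn_Ioi_rpow_of_lt (by norm_num) one_pos
    have h2 : IntegrableOn (fun t : ℝ => (t ^ 2)⁻¹) (Ioi 1) volume := by
      apply h1.congr_fun _ measurableSet_Ioi
      intro t ht
      have ht0 : (0:ℝ) ≤ t := le_of_lt (lt_trans one_pos ht)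
      show t ^ (-2 : ℝ) = (t ^ 2)⁻¹
      rw [show ((-2:ℝ)) = -(2:ℝ) by norm_num, Real.rpow_neg ht0, Real.rpow_two]
    exact h2.const_mul c0
  -- product integrability
  have hgint : Integrable (fun p : ℝ × EuclideanSpace ℝ (Fin n) => g p.1 p.2)
      ((volume.restrict (Ioi (1:ℝ))).prod volume) := by
    rw [integrable_prod_iff hgc.aestronglyMeasurable]
    constructor
    · filter_upwards [self_mem_ae_restrict measurableSet_Ioi] with t ht
      exact hslice t (le_of_lt ht)
    · apply Integrable.mono' hD
      · exact (hgc.aestronglyMeasurable.norm).integral_prod_right'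
      · filter_upwards [self_mem_ae_restrict measurableSet_Ioi] with t ht
        rw [Real.norm_eq_abs, abs_of_nonneg (integral_nonneg fun y => norm_nonneg _)]
        exact hDbound t ht
  -- representation of LHS integrand
  have hrepr : (fun y : EuclideanSpace ℝ (Fin n) =>
      (∫ t in Set.Ioi (1 : ℝ), (t - 1) ^ (ℓ - 1) * t ^ (n - ℓ) * θ (x + t • (y - x))) *
        (x j - y j) * f y) = fun y => ∫ t in Set.Ioi (1:ℝ), g t y := by
    funext y
    rw [mul_assoc, ← integral_mul_const]
  have int1 : Integrable (fun y : EuclideanSpace ℝ (Fin n) =>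
      (∫ t in Set.Ioi (1 : ℝ), (t - 1) ^ (ℓ - 1) * t ^ (n - ℓ) * θ (x + t • (y - x))) *
        (x j - y j) * f y) := by
    rw [hrepr]
    exact hgint.integral_prod_right
  -- the parametrized integral H
  set H : ℝ → ℝ := fun s => ∫ a : EuclideanSpace ℝ (Fin n),
    θ a * (x j - a j) * f (x + s • (a - x)) with hH
  -- change of variables for fixed t
  have hone : ∀ t ∈ Ioi (1:ℝ), (∫ y, g t y) =
      ((t ^ n)⁻¹ * ((t - 1) ^ (ℓ - 1) * t ^ (n - ℓ) * t⁻¹)) * H t⁻¹ := by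
    intro t ht
    have ht1 : (1:ℝ) < t := ht
    have ht0 : (0:ℝ) < t := lt_trans one_pos ht1
    have ht0' : t ≠ 0 := ne_of_gt ht0
    set Φ : EuclideanSpace ℝ (Fin n) → ℝ := fun z =>
      ((t - 1) ^ (ℓ - 1) * t ^ (n - ℓ) * θ (x + z)) *
        ((-(t⁻¹ * z j)) * f (x + t⁻¹ • z)) with hΦ
    set Ψ : EuclideanSpace ℝ (Fin n) → ℝ := fun a =>
      ((t - 1) ^ (ℓ - 1) * t ^ (n - ℓ) * t⁻¹) *
        (θ a * (x j - a j) * f (x + t⁻¹ • (a - x))) with hΨ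
    have e1 : ∀ y, g t y = Φ (t • (y - x)) := by
      intro y
      have hz1 : x + t⁻¹ • (t • (y - x)) = y := by
        rw [smul_smul, inv_mul_cancel₀ ht0', one_smul]
        abel
      have hz2 : ((t • (y - x)) j : ℝ) = t * (y j - x j) := rfl
      simp only [hΦ, hg, hz1, hz2]
      congr 1
      have h3 : -(t⁻¹ * (t * (y j - x j))) = x j - y j := by
        field_simp
        ring
      rw [h3]
    have e2 : ∀ z, Φ z = Ψ (z + x) := by
      intro z
      have h1 : z + x - x = z := by abel
      have h2 : ((z + x) j : ℝ) = z j + x j := rfl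
      simp only [hΦ, hΨ, h1, h2]
      rw [add_comm z x]
      ring
    calc (∫ y, g t y) = ∫ y, (fun w => Φ (t • w)) (y - x) := by
          congr 1
          funext y
          exact e1 y
      _ = ∫ w, Φ (t • w) := integral_sub_right_eq_self (fun w => Φ (t • w)) x
      _ = |(t ^ Module.finrank ℝ (EuclideanSpace ℝ (Fin n)))⁻¹| • ∫ z, Φ z :=
          Measure.integral_comp_smul volume Φ t
      _ = (t ^ n)⁻¹ * ∫ z, Φ z := by
          rw [finrank_euclideanSpace_fin, smul_eq_mul, abs_of_pos (by positivity)]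
      _ = (t ^ n)⁻¹ * ∫ z, Ψ (z + x) := by
          congr 1
          exact integral_congr_ae (Filter.Eventually.of_forall e2)
      _ = (t ^ n)⁻¹ * ∫ a, Ψ a := by rw [integral_add_right_eq_self Ψ x]
      _ = ((t ^ n)⁻¹ * ((t - 1) ^ (ℓ - 1) * t ^ (n - ℓ) * t⁻¹)) * H t⁻¹ := by
          rw [hΨ, hH]
          rw [integral_const_mul]
          ring
  -- LHS equals the Ioo-form integral
  have LHSeq : (∫ y : EuclideanSpace ℝ (Fin n),
      (∫ t in Set.Ioi (1 : ℝ), (t - 1) ^ (ℓ - 1) * t ^ (n - ℓ) * θ (x + t • (y - x))) *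
        (x j - y j) * f y) = ∫ s in Ioo (0:ℝ) 1, (1 - s) ^ (ℓ - 1) * H s := by
    rw [hrepr]
    rw [← integral_integral_swap hgint]
    rw [setIntegral_congr_fun measurableSet_Ioi (fun t ht => hone t ht)]
    rw [← _root_.image_inv_Ioo, integral_image_eq_integral_abs_deriv_smul measurableSet_Ioo
      (fun s hs => (hasDerivAt_inv (ne_of_gt hs.1)).hasDerivWithinAt)
      (fun a _ b _ hab => inv_injective hab)]
    apply setIntegral_congr_fun measurableSet_Ioo
    intro s hs
    obtain ⟨hs0, hs1⟩ := hs
    have hs0' : s ≠ 0 := ne_of_gt hs0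
    beta_reduce
    rw [smul_eq_mul, inv_inv, abs_neg, abs_inv, abs_of_pos (by positivity : (0:ℝ) < s ^ 2)]
    have efact : (s ^ 2)⁻¹ * (((s⁻¹) ^ n)⁻¹ * ((s⁻¹ - 1) ^ (ℓ - 1) * (s⁻¹) ^ (n - ℓ) * s))
        = (1 - s) ^ (ℓ - 1) := by
      have e4 : (s⁻¹ - 1) = (1 - s) / s := by field_simp
      rw [e4, div_pow, inv_pow, inv_pow, inv_inv]
      have hs2 : s ^ (ℓ - 1) * s ^ (n - ℓ) = s ^ (n - 1) := hpow s
      have hs3 : s ^ n * s = s ^ (n - 1) * s ^ 2 := by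
        rw [← pow_succ, ← pow_add]; congr 1; omega
      have hsn : (s ^ (n - 1)) ≠ 0 := pow_ne_zero _ hs0'
      calc (s ^ 2)⁻¹ * (s ^ n * ((1 - s) ^ (ℓ - 1) / s ^ (ℓ - 1) * (s ^ (n - ℓ))⁻¹ * s))
          = (1 - s) ^ (ℓ - 1) * ((s ^ n * s) * ((s ^ 2)⁻¹ * (s ^ (ℓ - 1) * s ^ (n - ℓ))⁻¹)) := by
            ring
        _ = (1 - s) ^ (ℓ - 1) * ((s ^ (n - 1) * s ^ 2) * ((s ^ 2)⁻¹ * (s ^ (n - 1))⁻¹)) := by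
            rw [hs2, hs3]
        _ = (1 - s) ^ (ℓ - 1) := by
            rw [← mul_inv, mul_comm ((s:ℝ) ^ 2) (s ^ (n - 1)),
              mul_inv_cancel₀ (by positivity : (s:ℝ) ^ (n - 1) * s ^ 2 ≠ 0), mul_one]
    rw [← mul_assoc, efact]
  -- RHS machinery
  set h2f : ℝ → EuclideanSpace ℝ (Fin n) → ℝ := fun u a =>
    (1 - u) ^ (ℓ - 1) * (θ a * (x j - a j) * f (x + u • (a - x))) with hh
  have hIcont : Continuous (fun a : EuclideanSpace ℝ (Fin n) =>
      ∫ t in (0:ℝ)..1, t ^ (ℓ - 1) * f (a + t • (x - a))) := by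
    apply intervalIntegral.continuous_parametric_intervalIntegral_of_continuous'
    exact (continuous_snd.pow _).mul (hf.comp (continuous_fst.add
      (continuous_snd.smul (continuous_const.sub continuous_fst))))
  have int2 : Integrable (fun a : EuclideanSpace ℝ (Fin n) =>
      θ a * (x j - a j) * ∫ t in (0:ℝ)..1, t ^ (ℓ - 1) * f (a + t • (x - a))) := by
    have hcont : Continuous (fun a : EuclideanSpace ℝ (Fin n) =>
        θ a * (x j - a j) * ∫ t in (0:ℝ)..1, t ^ (ℓ - 1) * f (a + t • (x - a))) :=
      (hθ.continuous.mul (continuous_const.sub (EuclideanSpace.proj j).continuous)).mul hIcont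
    have hcs : HasCompactSupport (fun a : EuclideanSpace ℝ (Fin n) =>
        θ a * (x j - a j) * ∫ t in (0:ℝ)..1, t ^ (ℓ - 1) * f (a + t • (x - a))) :=
      HasCompactSupport.intro hθc (fun a ha => by
        simp [image_eq_zero_of_notMem_tsupport ha])
    exact hcont.integrable_of_hasCompactSupport hcs
  have hR1 : ∀ a : EuclideanSpace ℝ (Fin n),
      θ a * (x j - a j) * (∫ t in (0:ℝ)..1, t ^ (ℓ - 1) * f (a + t • (x - a)))
      = ∫ u in Ioo (0:ℝ) 1, h2f u a := by
    intro a
    have e1 : (∫ t in (0:ℝ)..1, t ^ (ℓ - 1) * f (a + t • (x - a)))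
        = ∫ u in (0:ℝ)..1, (1 - u) ^ (ℓ - 1) * f (x + u • (a - x)) := by
      have e0 := intervalIntegral.integral_comp_sub_left (a := (0:ℝ)) (b := 1)
        (fun t => t ^ (ℓ - 1) * f (a + t • (x - a))) 1
      norm_num at e0
      rw [← e0]
      congr 1
      funext u
      have harg : a + (1 - u) • (x - a) = x + u • (a - x) := by module
      rw [harg]
    rw [e1, ← intervalIntegral.integral_const_mul]
    rw [intervalIntegral.integral_of_le zero_le_one, integral_Ioc_eq_integral_Ioo]
    apply setIntegral_congr_fun measurableSet_Ioo
    intro u _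
    simp only [hh]
    ring
  have hh2c : Continuous (fun p : ℝ × EuclideanSpace ℝ (Fin n) => h2f p.1 p.2) := by
    apply Continuous.mul
    · fun_prop
    · exact ((hθ.continuous.comp continuous_snd).mul
        (continuous_const.sub ((EuclideanSpace.proj j).continuous.comp continuous_snd))).mul
        (hf.comp (continuous_const.add (continuous_fst.smul
          (continuous_snd.sub continuous_const))))
  have hslice2 : ∀ u : ℝ, Integrable (h2f u) volume := by
    intro u
    have hcont : Continuous (h2f u) := hh2c.comp (continuous_const.prodMk continuous_id)
    have hcs : HasCompactSupport (h2f u) := HasCompactSupport.intro hθc (fun a ha => by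
      simp [hh, image_eq_zero_of_notMem_tsupport ha])
    exact hcont.integrable_of_hasCompactSupport hcs
  set ψ : EuclideanSpace ℝ (Fin n) → ℝ := fun a => |θ a * (x j - a j)| * M with hψ
  have hψint : Integrable ψ volume := by
    have hcont : Continuous ψ :=
      ((hθ.continuous.mul (continuous_const.sub (EuclideanSpace.proj j).continuous)).abs).mul
        continuous_const
    have hcs : HasCompactSupport ψ := HasCompactSupport.intro hθc (fun a ha => by
      simp [hψ, image_eq_zero_of_notMem_tsupport ha])
    exact hcont.integrable_of_hasCompactSupport hcs
  have hhb : ∀ u ∈ Ioo (0:ℝ) 1, ∀ a, ‖h2f u a‖ ≤ ψ a := by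
    intro u hu a
    have h1 : |(1 - u) ^ (ℓ - 1)| ≤ 1 := by
      rw [abs_pow]
      apply pow_le_one₀ (abs_nonneg _)
      rw [abs_of_nonneg (by linarith [hu.2])]
      linarith [hu.1]
    calc ‖h2f u a‖ = |(1 - u) ^ (ℓ - 1)| * (|θ a * (x j - a j)| * |f (x + u • (a - x))|) := by
          simp only [hh, Real.norm_eq_abs, abs_mul]
      _ ≤ 1 * (|θ a * (x j - a j)| * M) :=
          mul_le_mul h1 (mul_le_mul_of_nonneg_left (hfM _) (abs_nonneg _))
            (by positivity) zero_le_one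
      _ = ψ a := by rw [one_mul, hψ]
  haveI : IsFiniteMeasure (volume.restrict (Ioo (0:ℝ) 1)) := by
    constructor
    rw [Measure.restrict_apply_univ]
    simp [Real.volume_Ioo]
  have hhint : Integrable (fun p : ℝ × EuclideanSpace ℝ (Fin n) => h2f p.1 p.2)
      ((volume.restrict (Ioo (0:ℝ) 1)).prod volume) := by
    rw [integrable_prod_iff hh2c.aestronglyMeasurable]
    constructor
    · exact Filter.Eventually.of_forall fun u => hslice2 u
    · apply Integrable.mono' (integrable_const (∫ a, ψ a))
      · exact (hh2c.aestronglyMeasurable.norm).integral_prod_right'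
      · filter_upwards [self_mem_ae_restrict measurableSet_Ioo] with u hu
        rw [Real.norm_eq_abs, abs_of_nonneg (integral_nonneg fun a => norm_nonneg _)]
        exact integral_mono ((hslice2 u).norm) hψint (hhb u hu)
  have RHSeq : (∫ a : EuclideanSpace ℝ (Fin n),
      θ a * (x j - a j) * ∫ t in (0:ℝ)..1, t ^ (ℓ - 1) * f (a + t • (x - a)))
      = ∫ u in Ioo (0:ℝ) 1, (1 - u) ^ (ℓ - 1) * H u := by
    calc (∫ a : EuclideanSpace ℝ (Fin n),
        θ a * (x j - a j) * ∫ t in (0:ℝ)..1, t ^ (ℓ - 1) * f (a + t • (x - a)))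
        = ∫ a : EuclideanSpace ℝ (Fin n), ∫ u in Ioo (0:ℝ) 1, h2f u a := by
          exact integral_congr_ae (Filter.Eventually.of_forall hR1)
      _ = ∫ u in Ioo (0:ℝ) 1, ∫ a, h2f u a := (integral_integral_swap hhint).symm
      _ = ∫ u in Ioo (0:ℝ) 1, (1 - u) ^ (ℓ - 1) * H u := by
          apply setIntegral_congr_fun measurableSet_Ioo
          intro u _
          exact integral_const_mul _ _
  exact ⟨int1, int2, LHSeq.trans RHSeq.symm⟩

end
end

section
/- Let 1 ≤ m ≤ n. (i) For all x, y ∈ ℝⁿ with x ≠ y: if y does not belong to the convex hull of {x} ∪ supp θ, then G_m(y,x) = 0. (ii) Consequently, if Ω ⊆ ℝⁿ is open and starlike with respect to an open ball B with supp θ ⊆ B, if f : ℝⁿ → ℝ is bounded and continuous with f = 0 on Ω, and if x ∈ Ω, then ∫_{ℝⁿ} G_m(y,x)(x_j − y_j) f(y) dy = 0 for every j ∈ {1,…,n}; that is, the value of the Poincaré-type operator at x ∈ Ω depends only on the restriction of f to Ω. -/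
open MeasureTheory Set

noncomputable section

theorem stmt3 {n : ℕ} (hn : 1 ≤ n) (θ : EuclideanSpace ℝ (Fin n) → ℝ)
    (hθ : ContDiff ℝ (⊤ : ℕ∞) θ) (hθc : HasCompactSupport θ)
    (m : ℕ) (hm1 : 1 ≤ m) (hmn : m ≤ n) :
    -- (i)
    (∀ x y : EuclideanSpace ℝ (Fin n), x ≠ y →
        y ∉ convexHull ℝ ({x} ∪ tsupport θ) → Gker θ m y x = 0) ∧
    -- (ii)
    (∀ (Ω : Set (EuclideanSpace ℝ (Fin n))) (c : EuclideanSpace ℝ (Fin n)) (r : ℝ),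
        IsOpen Ω → 0 < r → tsupport θ ⊆ Metric.ball c r →
        (∀ z ∈ Ω, convexHull ℝ ({z} ∪ Metric.ball c r) ⊆ Ω) →
        ∀ f : EuclideanSpace ℝ (Fin n) → ℝ, Continuous f → (∃ M, ∀ y, |f y| ≤ M) →
          (∀ y ∈ Ω, f y = 0) →
          ∀ x ∈ Ω, ∀ j : Fin n,
            (∫ y : EuclideanSpace ℝ (Fin n), Gker θ m y x * (x j - y j) * f y) = 0) := by
  have part1 : ∀ x y : EuclideanSpace ℝ (Fin n), x ≠ y →
      y ∉ convexHull ℝ ({x} ∪ tsupport θ) → Gker θ m y x = 0 := by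
    intro x y hxy hy
    have h : ∀ t ∈ Set.Ioi (1 : ℝ),
        (t - 1) ^ (n - m) * t ^ (m - 1) * θ (x + t • (y - x)) = 0 := by
      intro t ht
      have ht1 : (1 : ℝ) < t := ht
      have ht0 : t ≠ 0 := by linarith
      by_contra hcon
      have hθt : θ (x + t • (y - x)) ≠ 0 := by
        intro h0
        exact hcon (by rw [h0, mul_zero])
      have hz : x + t • (y - x) ∈ tsupport θ := subset_tsupport θ hθt
      apply hy
      have hx : x ∈ convexHull ℝ ({x} ∪ tsupport θ) :=
        subset_convexHull _ _ (Or.inl rfl)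
      have hz' : x + t • (y - x) ∈ convexHull ℝ ({x} ∪ tsupport θ) :=
        subset_convexHull _ _ (Or.inr hz)
      have key : (1 - 1 / t) • x + (1 / t) • (x + t • (y - x)) = y := by
        rw [smul_add, smul_smul, one_div, inv_mul_cancel₀ ht0, one_smul]
        module
      have ha : (0 : ℝ) ≤ 1 - 1 / t := by
        have : 1 / t < 1 := by
          rw [div_lt_one (by linarith)]; exact ht1
        linarith
      have hb : (0 : ℝ) ≤ 1 / t := by positivity
      have hab : (1 - 1 / t) + 1 / t = 1 := by ring
      have := (convex_convexHull ℝ ({x} ∪ tsupport θ)) hx hz' ha hb hab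
      rwa [key] at this
    rw [Gker]
    rw [MeasureTheory.setIntegral_congr_fun measurableSet_Ioi h]
    simp
  refine ⟨part1, ?_⟩
  intro Ω c r hΩ hr hsupp hstar f hf ⟨M, hM⟩ hf0 x hx j
  have hzero : ∀ y : EuclideanSpace ℝ (Fin n),
      Gker θ m y x * (x j - y j) * f y = 0 := by
    intro y
    by_cases hyΩ : y ∈ Ω
    · rw [hf0 y hyΩ, mul_zero]
    · have hxy : x ≠ y := fun h => hyΩ (h ▸ hx)
      have hyh : y ∉ convexHull ℝ ({x} ∪ tsupport θ) := by
        intro hy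
        apply hyΩ
        apply hstar x hx
        exact convexHull_mono (union_subset_union_right _ hsupp) hy
      rw [part1 x y hxy hyh, zero_mul, zero_mul]
  simp only [hzero, integral_zero]

end
end

section
/- Let 1 ≤ ℓ ≤ n, let j ∈ {1,…,n}, and let f : ℝⁿ → ℝ be continuous with compact support. Define (Tf)(x) = ∫_{ℝⁿ} G_ℓ(x,y)(x_j − y_j) f(y) dy. If x does not belong to ⋃_{y ∈ supp f} convexHull({y} ∪ supp θ) (the starlike hull of supp f with respect to supp θ), then (Tf)(x) = 0. In particular, if Ω ⊆ ℝⁿ is a bounded open set starlike with respect to an open ball B with supp θ ⊆ B, and supp f ⊆ closure(Ω), then supp(Tf) ⊆ closure(Ω). -/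
open MeasureTheory Set

noncomputable section

lemma Gker_eq_zero {n : ℕ} (θ : EuclideanSpace ℝ (Fin n) → ℝ) (m : ℕ)
    (x y : EuclideanSpace ℝ (Fin n))
    (hx : x ∉ convexHull ℝ ({y} ∪ tsupport θ)) : Gker θ m x y = 0 := by
  have h : ∀ t ∈ Set.Ioi (1 : ℝ),
      (t - 1) ^ (n - m) * t ^ (m - 1) * θ (y + t • (x - y)) = 0 := by
    intro t ht
    simp only [Set.mem_Ioi] at ht
    have ht0 : t ≠ 0 := by linarith
    by_contra hne
    have hθne : θ (y + t • (x - y)) ≠ 0 := by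
      intro h0; exact hne (by rw [h0, mul_zero])
    have hz : y + t • (x - y) ∈ tsupport θ := subset_tsupport θ hθne
    apply hx
    have hseg : x ∈ segment ℝ y (y + t • (x - y)) := by
      have h1 : t⁻¹ ≤ 1 := inv_le_one_of_one_le₀ ht.le
      have h2 : (0:ℝ) ≤ t⁻¹ := by positivity
      refine ⟨1 - t⁻¹, t⁻¹, by linarith, h2, by ring, ?_⟩
      match_scalars <;> field_simp <;> ring
    have : segment ℝ y (y + t • (x - y)) ⊆ convexHull ℝ ({y} ∪ tsupport θ) :=
      segment_subset_convexHull (Or.inl rfl) (Or.inr hz)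
    exact this hseg
  rw [Gker, setIntegral_congr_fun measurableSet_Ioi h, integral_zero]

theorem stmt4 {n : ℕ} (hn : 1 ≤ n) (θ : EuclideanSpace ℝ (Fin n) → ℝ)
    (hθ : ContDiff ℝ (⊤ : ℕ∞) θ) (hθc : HasCompactSupport θ)
    (ℓ : ℕ) (hℓ1 : 1 ≤ ℓ) (hℓn : ℓ ≤ n) (j : Fin n)
    (f : EuclideanSpace ℝ (Fin n) → ℝ) (hf : Continuous f) (hfc : HasCompactSupport f) :
    -- vanishing outside the starlike hull of the support of f
    (∀ x : EuclideanSpace ℝ (Fin n),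
        x ∉ ⋃ y ∈ tsupport f, convexHull ℝ ({y} ∪ tsupport θ) →
        (∫ y : EuclideanSpace ℝ (Fin n), Gker θ ℓ x y * (x j - y j) * f y) = 0) ∧
    -- support preservation on domains starlike with respect to a ball containing supp θ
    (∀ (Ω : Set (EuclideanSpace ℝ (Fin n))) (c : EuclideanSpace ℝ (Fin n)) (r : ℝ),
        IsOpen Ω → Bornology.IsBounded Ω → 0 < r → tsupport θ ⊆ Metric.ball c r →
        (∀ z ∈ Ω, convexHull ℝ ({z} ∪ Metric.ball c r) ⊆ Ω) →
        tsupport f ⊆ closure Ω →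
        tsupport (fun x : EuclideanSpace ℝ (Fin n) =>
            ∫ y : EuclideanSpace ℝ (Fin n), Gker θ ℓ x y * (x j - y j) * f y)
          ⊆ closure Ω) := by
  have part1 : ∀ x : EuclideanSpace ℝ (Fin n),
      x ∉ ⋃ y ∈ tsupport f, convexHull ℝ ({y} ∪ tsupport θ) →
      (∫ y : EuclideanSpace ℝ (Fin n), Gker θ ℓ x y * (x j - y j) * f y) = 0 := by
    intro x hx
    have h : ∀ y : EuclideanSpace ℝ (Fin n),
        Gker θ ℓ x y * (x j - y j) * f y = 0 := by
      intro y
      by_cases hfy : f y = 0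
      · rw [hfy, mul_zero]
      · have hy : y ∈ tsupport f := subset_tsupport f hfy
        have hxc : x ∉ convexHull ℝ ({y} ∪ tsupport θ) := by
          intro hc
          exact hx (Set.mem_biUnion hy hc)
        rw [Gker_eq_zero θ ℓ x y hxc, zero_mul, zero_mul]
    simp only [h, integral_zero]
  refine ⟨part1, ?_⟩
  intro Ω c r hΩo hΩb hr hθb hstar hfΩ
  apply closure_minimal _ isClosed_closure
  intro x hxs
  rw [Function.mem_support] at hxs
  by_contra hxΩ
  -- derive x ∈ the union
  have hxu : x ∈ ⋃ y ∈ tsupport f, convexHull ℝ ({y} ∪ tsupport θ) := by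
    by_contra hxu
    exact hxs (part1 x hxu)
  simp only [Set.mem_iUnion] at hxu
  obtain ⟨y, hy, hxc⟩ := hxu
  -- x ∈ convexHull (insert y (ball c r))
  have hxc' : x ∈ convexHull ℝ (insert y (Metric.ball c r)) := by
    refine convexHull_mono ?_ hxc
    rintro z (hz | hz)
    · exact Or.inl hz
    · exact Or.inr (hθb hz)
  rw [convexHull_insert (Metric.nonempty_ball.mpr hr),
    (convex_ball c r).convexHull_eq, mem_convexJoin] at hxc'
  obtain ⟨y', hy', z, hz, hxseg⟩ := hxc'
  rw [Set.mem_singleton_iff] at hy'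
  subst hy'
  obtain ⟨a, b, ha, hb, hab, hxe⟩ := hxseg
  -- y ∈ closure Ω : get a sequence
  have hyc := hfΩ hy
  obtain ⟨u, hu, hulim⟩ := mem_closure_iff_seq_limit.mp hyc
  have hmem : ∀ k, a • u k + b • z ∈ Ω := by
    intro k
    refine hstar (u k) (hu k) ?_
    have hseg : a • u k + b • z ∈ segment ℝ (u k) z := ⟨a, b, ha, hb, hab, rfl⟩
    exact segment_subset_convexHull (Set.mem_union_left _ (Set.mem_singleton _))
      (Set.mem_union_right _ hz) hseg
  have hlim : Filter.Tendsto (fun k => a • u k + b • z) Filter.atTop (nhds x) := by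
    rw [← hxe]
    exact ((hulim.const_smul a).add tendsto_const_nhds)
  exact hxΩ (mem_closure_of_tendsto hlim (Filter.Eventually.of_forall hmem))

end
end

section
/- Let 1 ≤ ℓ ≤ n, let j ∈ {1,…,n}, and let p : ℝⁿ → ℝ be a polynomial function (the evaluation of a multivariate polynomial) of total degree at most d. Then the function x ↦ ∫_{ℝⁿ} θ(a) (x_j − a_j) [∫₀¹ t^{ℓ−1} p(a + t(x−a)) dt] da is a polynomial function on ℝⁿ of total degree at most d + 1. That is, the regularized Poincaré-type operator maps differential forms with polynomial coefficients to differential forms with polynomial coefficients. -/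
open MeasureTheory Set

noncomputable section

namespace Stmt5Aux

open Finset MvPolynomial

variable {n : ℕ}

/-- `f` is a polynomial function of total degree at most `D`. -/
def PolyLe (D : ℕ) (f : EuclideanSpace ℝ (Fin n) → ℝ) : Prop :=
  ∃ Q : MvPolynomial (Fin n) ℝ, Q.totalDegree ≤ D ∧
    ∀ x : EuclideanSpace ℝ (Fin n), f x = MvPolynomial.eval (fun i => x i) Q

lemma PolyLe.mono {D D' : ℕ} {f : EuclideanSpace ℝ (Fin n) → ℝ}
    (h : PolyLe D f) (hD : D ≤ D') : PolyLe D' f := by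
  obtain ⟨Q, hQ, he⟩ := h
  exact ⟨Q, hQ.trans hD, he⟩

lemma polyLe_const (c : ℝ) : PolyLe (n := n) 0 (fun _ => c) :=
  ⟨MvPolynomial.C c, by simp, by simp⟩

lemma polyLe_X (i : Fin n) : PolyLe 1 (fun x : EuclideanSpace ℝ (Fin n) => x i) :=
  ⟨MvPolynomial.X i, le_of_eq (MvPolynomial.totalDegree_X i), by simp⟩

lemma PolyLe.mul {D₁ D₂ : ℕ} {f g : EuclideanSpace ℝ (Fin n) → ℝ}
    (hf : PolyLe D₁ f) (hg : PolyLe D₂ g) : PolyLe (D₁ + D₂) (fun x => f x * g x) := by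
  obtain ⟨Q₁, hQ₁, he₁⟩ := hf
  obtain ⟨Q₂, hQ₂, he₂⟩ := hg
  refine ⟨Q₁ * Q₂, (MvPolynomial.totalDegree_mul _ _).trans (add_le_add hQ₁ hQ₂), ?_⟩
  intro x; rw [map_mul, ← he₁ x, ← he₂ x]

lemma PolyLe.sub {D : ℕ} {f g : EuclideanSpace ℝ (Fin n) → ℝ}
    (hf : PolyLe D f) (hg : PolyLe D g) : PolyLe D (fun x => f x - g x) := by
  obtain ⟨Q₁, hQ₁, he₁⟩ := hf
  obtain ⟨Q₂, hQ₂, he₂⟩ := hg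
  refine ⟨Q₁ - Q₂, (MvPolynomial.totalDegree_sub _ _).trans (sup_le hQ₁ hQ₂), ?_⟩
  intro x; rw [map_sub, ← he₁ x, ← he₂ x]

lemma PolyLe.add {D : ℕ} {f g : EuclideanSpace ℝ (Fin n) → ℝ}
    (hf : PolyLe D f) (hg : PolyLe D g) : PolyLe D (fun x => f x + g x) := by
  obtain ⟨Q₁, hQ₁, he₁⟩ := hf
  obtain ⟨Q₂, hQ₂, he₂⟩ := hg
  refine ⟨Q₁ + Q₂, (MvPolynomial.totalDegree_add _ _).trans (sup_le hQ₁ hQ₂), ?_⟩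
  intro x; rw [map_add, ← he₁ x, ← he₂ x]

lemma polyLe_sum {ι : Type*} (s : Finset ι) (f : ι → EuclideanSpace ℝ (Fin n) → ℝ) (D : ℕ)
    (h : ∀ i ∈ s, PolyLe D (f i)) : PolyLe D (fun x => ∑ i ∈ s, f i x) := by
  classical
  induction s using Finset.induction with
  | empty => simpa using (polyLe_const (n := n) 0).mono (Nat.zero_le D)
  | @insert a s ha ih =>
    have : PolyLe D (fun x => f a x + ∑ i ∈ s, f i x) :=
      (h a (Finset.mem_insert_self a s)).add
        (ih fun i hi => h i (Finset.mem_insert_of_mem hi))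
    simpa [Finset.sum_insert ha] using this

lemma polyLe_pow (i : Fin n) (k : ℕ) :
    PolyLe k (fun x : EuclideanSpace ℝ (Fin n) => x i ^ k) := by
  refine ⟨MvPolynomial.X i ^ k, ?_, by simp⟩
  exact (MvPolynomial.totalDegree_pow _ _).trans (by simp [MvPolynomial.totalDegree_X])

lemma polyLe_prod_pow (k : Fin n → ℕ) :
    PolyLe (∑ i, k i) (fun x : EuclideanSpace ℝ (Fin n) => ∏ i, x i ^ k i) := by
  classical
  have : ∀ s : Finset (Fin n),
      PolyLe (∑ i ∈ s, k i) (fun x : EuclideanSpace ℝ (Fin n) => ∏ i ∈ s, x i ^ k i) := by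
    intro s
    induction s using Finset.induction with
    | empty => simpa using polyLe_const (n := n) 1
    | @insert a s ha ih =>
      have := (polyLe_pow a (k a)).mul ih
      simpa [Finset.prod_insert ha, Finset.sum_insert ha] using this
  exact this Finset.univ

end Stmt5Aux

open Stmt5Aux Finset

theorem stmt5 {n : ℕ} (hn : 1 ≤ n) (θ : EuclideanSpace ℝ (Fin n) → ℝ)
    (hθ : ContDiff ℝ (⊤ : ℕ∞) θ) (hθc : HasCompactSupport θ)
    (ℓ : ℕ) (hℓ1 : 1 ≤ ℓ) (hℓn : ℓ ≤ n) (j : Fin n)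
    (d : ℕ) (P : MvPolynomial (Fin n) ℝ) (hP : P.totalDegree ≤ d) :
    ∃ Q : MvPolynomial (Fin n) ℝ, Q.totalDegree ≤ d + 1 ∧
      ∀ x : EuclideanSpace ℝ (Fin n),
        (∫ a : EuclideanSpace ℝ (Fin n),
            θ a * (x j - a j) *
              ∫ t in (0 : ℝ)..1,
                t ^ (ℓ - 1) * MvPolynomial.eval (fun i => (a + t • (x - a)) i) P) =
          MvPolynomial.eval (fun i => x i) Q := by
  classical
  -- index set: pairs (m, k) with m a monomial of P and k ≤ m pointwise
  set K : (Fin n →₀ ℕ) → Finset (Fin n → ℕ) :=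
    fun m => Fintype.piFinset fun i => Finset.range (m i + 1) with hK
  set Sg : Finset ((_ : Fin n →₀ ℕ) × (Fin n → ℕ)) := P.support.sigma K with hSg
  -- constants
  set Tc : ℕ → ℕ → ℝ := fun α β => ∫ t in (0:ℝ)..1, t ^ (ℓ - 1 + α) * (1 - t) ^ β with hTc
  set A1 : (Fin n → ℕ) → ℝ :=
    fun e => ∫ a : EuclideanSpace ℝ (Fin n), θ a * ∏ i, a i ^ e i with hA1
  set A2 : (Fin n → ℕ) → ℝ :=
    fun e => ∫ a : EuclideanSpace ℝ (Fin n), θ a * (a j * ∏ i, a i ^ e i) with hA2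
  -- continuity of coordinates / monomials
  have hcoord : ∀ i : Fin n, Continuous fun a : EuclideanSpace ℝ (Fin n) => a i :=
    fun i => (EuclideanSpace.proj i).continuous
  have hcontmon : ∀ e : Fin n → ℕ,
      Continuous fun a : EuclideanSpace ℝ (Fin n) => ∏ i, a i ^ e i := by
    intro e
    exact continuous_finset_prod _ fun i _ => (hcoord i).pow (e i)
  have hever : ∀ g : EuclideanSpace ℝ (Fin n) → ℝ, Continuous g →
      Integrable (fun a => θ a * g a) := by
    intro g hg
    exact (hθ.continuous.mul hg).integrable_of_hasCompactSupport (hθc.mul_right)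
  -- the key pointwise expansion of the inner integrand
  have hpt : ∀ (x a : EuclideanSpace ℝ (Fin n)) (t : ℝ),
      t ^ (ℓ - 1) * MvPolynomial.eval (fun i => (a + t • (x - a)) i) P =
      ∑ p ∈ Sg, (P.coeff p.1 * ∏ i, ((p.1 i).choose (p.2 i) : ℝ)) *
        ((∏ i, x i ^ p.2 i) * (∏ i, a i ^ (p.1 i - p.2 i))) *
        (t ^ (ℓ - 1 + ∑ i, p.2 i) * (1 - t) ^ (∑ i, (p.1 i - p.2 i))) := by
    intro x a t
    rw [MvPolynomial.eval_eq']
    rw [hSg, Finset.sum_sigma, Finset.mul_sum]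
    refine Finset.sum_congr rfl ?_
    intro m hm
    have hco : ∀ i : Fin n, (a + t • (x - a)) i = t * x i + (1 - t) * a i := by
      intro i
      simp only [PiLp.add_apply, PiLp.smul_apply, PiLp.sub_apply, smul_eq_mul]
      ring
    simp only [hco]
    have hexp : ∏ i, (t * x i + (1 - t) * a i) ^ m i =
        ∑ k ∈ K m, ∏ i, ((t * x i) ^ k i * ((1 - t) * a i) ^ (m i - k i) *
          ((m i).choose (k i) : ℝ)) := by
      rw [hK]
      calc ∏ i, (t * x i + (1 - t) * a i) ^ m i
          = ∏ i, ∑ c ∈ Finset.range (m i + 1),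
              ((t * x i) ^ c * ((1 - t) * a i) ^ (m i - c) * ((m i).choose c : ℝ)) :=
            Finset.prod_congr rfl fun i _ => add_pow (t * x i) ((1 - t) * a i) (m i)
        _ = _ := Finset.prod_univ_sum (fun i => Finset.range (m i + 1))
              (fun i c => (t * x i) ^ c * ((1 - t) * a i) ^ (m i - c) * ((m i).choose c : ℝ))
    rw [hexp, Finset.mul_sum, Finset.mul_sum]
    refine Finset.sum_congr rfl ?_
    intro k hk
    simp only [mul_pow, Finset.prod_mul_distrib, Finset.prod_pow_eq_pow_sum]
    ring
  -- the inner t-integral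
  have hinner : ∀ (x a : EuclideanSpace ℝ (Fin n)),
      (∫ t in (0:ℝ)..1,
        t ^ (ℓ - 1) * MvPolynomial.eval (fun i => (a + t • (x - a)) i) P) =
      ∑ p ∈ Sg, (P.coeff p.1 * ∏ i, ((p.1 i).choose (p.2 i) : ℝ)) *
        ((∏ i, x i ^ p.2 i) * (∏ i, a i ^ (p.1 i - p.2 i))) *
        Tc (∑ i, p.2 i) (∑ i, (p.1 i - p.2 i)) := by
    intro x a
    simp only [hpt x a]
    rw [intervalIntegral.integral_finset_sum]
    · refine Finset.sum_congr rfl fun p _ => ?_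
      rw [intervalIntegral.integral_const_mul]
    · intro p _
      apply Continuous.intervalIntegrable
      exact continuous_const.mul ((continuous_pow _).mul
        ((continuous_const.sub continuous_id).pow _))
  -- the full representation
  have key : ∀ x : EuclideanSpace ℝ (Fin n),
      (∫ a : EuclideanSpace ℝ (Fin n),
          θ a * (x j - a j) *
            ∫ t in (0 : ℝ)..1,
              t ^ (ℓ - 1) * MvPolynomial.eval (fun i => (a + t • (x - a)) i) P) =
      ∑ p ∈ Sg,
        ((P.coeff p.1 * ∏ i, ((p.1 i).choose (p.2 i) : ℝ)) *
          Tc (∑ i, p.2 i) (∑ i, (p.1 i - p.2 i))) *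
        (∏ i, x i ^ p.2 i) *
        (x j * A1 (fun i => p.1 i - p.2 i) - A2 (fun i => p.1 i - p.2 i)) := by
    intro x
    have h1 : ∀ a : EuclideanSpace ℝ (Fin n),
        θ a * (x j - a j) *
          (∫ t in (0:ℝ)..1,
            t ^ (ℓ - 1) * MvPolynomial.eval (fun i => (a + t • (x - a)) i) P) =
        ∑ p ∈ Sg,
          (((P.coeff p.1 * ∏ i, ((p.1 i).choose (p.2 i) : ℝ)) *
              Tc (∑ i, p.2 i) (∑ i, (p.1 i - p.2 i)) * (∏ i, x i ^ p.2 i) * x j) *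
            (θ a * ∏ i, a i ^ (p.1 i - p.2 i)) -
          ((P.coeff p.1 * ∏ i, ((p.1 i).choose (p.2 i) : ℝ)) *
              Tc (∑ i, p.2 i) (∑ i, (p.1 i - p.2 i)) * (∏ i, x i ^ p.2 i)) *
            (θ a * (a j * ∏ i, a i ^ (p.1 i - p.2 i)))) := by
      intro a
      rw [hinner x a, Finset.mul_sum]
      refine Finset.sum_congr rfl fun p _ => ?_
      ring
    simp only [h1]
    rw [MeasureTheory.integral_finset_sum]
    · refine Finset.sum_congr rfl fun p _ => ?_
      rw [MeasureTheory.integral_sub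
          ((hever _ (hcontmon _)).const_mul _)
          ((hever (fun a : EuclideanSpace ℝ (Fin n) => a j * ∏ i, a i ^ (p.1 i - p.2 i))
            ((hcoord j).mul (hcontmon _))).const_mul _),
        MeasureTheory.integral_const_mul, MeasureTheory.integral_const_mul]
      rw [hA1, hA2]
      ring
    · intro p _
      exact ((hever _ (hcontmon _)).const_mul _).sub
        ((hever _ ((hcoord j).mul (hcontmon _))).const_mul _)
  -- each summand is a polynomial function of degree ≤ d + 1
  have hterm : ∀ p ∈ Sg, PolyLe (d + 1) (fun x : EuclideanSpace ℝ (Fin n) =>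
      ((P.coeff p.1 * ∏ i, ((p.1 i).choose (p.2 i) : ℝ)) *
          Tc (∑ i, p.2 i) (∑ i, (p.1 i - p.2 i))) *
        (∏ i, x i ^ p.2 i) *
        (x j * A1 (fun i => p.1 i - p.2 i) - A2 (fun i => p.1 i - p.2 i))) := by
    intro p hp
    rw [hSg, Finset.mem_sigma] at hp
    obtain ⟨hm, hk⟩ := hp
    have hkle : ∀ i, p.2 i ≤ p.1 i := by
      intro i
      have := (Fintype.mem_piFinset.mp hk) i
      simpa [Nat.lt_succ_iff] using Finset.mem_range.mp this
    have hdeg : (∑ i, p.2 i) ≤ d := by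
      calc (∑ i, p.2 i) ≤ ∑ i, p.1 i := Finset.sum_le_sum fun i _ => hkle i
        _ = p.1.sum fun _ e => e := (Finsupp.sum_fintype p.1 (fun _ e => e) (fun _ => rfl)).symm
        _ ≤ P.totalDegree := MvPolynomial.le_totalDegree hm
        _ ≤ d := hP
    have h1 : PolyLe (0 + (∑ i, p.2 i) + 1) (fun x : EuclideanSpace ℝ (Fin n) =>
        ((P.coeff p.1 * ∏ i, ((p.1 i).choose (p.2 i) : ℝ)) *
            Tc (∑ i, p.2 i) (∑ i, (p.1 i - p.2 i))) *
          (∏ i, x i ^ p.2 i) *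
          (x j * A1 (fun i => p.1 i - p.2 i) - A2 (fun i => p.1 i - p.2 i))) := by
      refine PolyLe.mul (PolyLe.mul (polyLe_const _) (polyLe_prod_pow _)) ?_
      exact PolyLe.sub ((polyLe_X j).mul (polyLe_const _)) ((polyLe_const _).mono (by norm_num))
    exact h1.mono (by omega)
  have := polyLe_sum Sg _ (d + 1) hterm
  obtain ⟨Q, hQd, hQe⟩ := this
  refine ⟨Q, hQd, fun x => ?_⟩
  rw [key x, ← hQe x]

end
end

section
/- Cartan's formula for the dilation flow: let 1 ≤ ℓ ≤ n, let u be a C¹ ℓ-form on ℝⁿ, and let a, x ∈ ℝⁿ and t ∈ ℝ. For each t define the (ℓ−1)-form w_t on ℝⁿ by w_t(z) = t^{ℓ−1} (z−a) ⌟ u(a + t(z−a)). Then the derivative in t of t^ℓ u(a + t(x−a)) (an Alt^ℓ(ℝⁿ)-valued function of t) satisfies d/dt [ t^ℓ u(a + t(x−a)) ] = (d w_t)(x) + t^ℓ (x−a) ⌟ (du)(a + t(x−a)). -/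
open MeasureTheory Set

noncomputable section

theorem coordSum' {n : ℕ} (q : EuclideanSpace ℝ (Fin n)) :
    q = ∑ i : Fin n, q i • EuclideanSpace.single i (1:ℝ) := by
  ext j
  rw [WithLp.ofLp_sum, Finset.sum_apply]
  simp [EuclideanSpace.single_apply, Finset.sum_ite_eq', mul_comm]

theorem consLin' {n m : ℕ} (g : AlternatingMap ℝ (EuclideanSpace ℝ (Fin n)) ℝ (Fin (m+1)))
    (w : Fin m → EuclideanSpace ℝ (Fin n)) (q : EuclideanSpace ℝ (Fin n)) :
    g (Fin.cons q w) = ∑ i : Fin n, q i * g (Fin.cons (EuclideanSpace.single i (1:ℝ)) w) := by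
  have h : ∀ p : EuclideanSpace ℝ (Fin n), g (Fin.cons p w) = g.curryLeft p w := fun p => rfl
  rw [h]
  conv_lhs => rw [coordSum' q]
  rw [map_sum]
  let Lw : AlternatingMap ℝ (EuclideanSpace ℝ (Fin n)) ℝ (Fin m) →ₗ[ℝ] ℝ :=
    { toFun := fun A => A w, map_add' := fun A B => rfl, map_smul' := fun c A => rfl }
  have hLw : ∀ A : AlternatingMap ℝ (EuclideanSpace ℝ (Fin n)) ℝ (Fin m), A w = Lw A :=
    fun A => rfl
  rw [hLw, map_sum]
  simp [Lw, h]

theorem permFact' {n m : ℕ} (g : AlternatingMap ℝ (EuclideanSpace ℝ (Fin n)) ℝ (Fin (m+1)))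
    (v : Fin (m+1) → EuclideanSpace ℝ (Fin n)) (k : Fin (m+1)) :
    g (Fin.cons (v k) (fun j => v (k.succAbove j))) = (-1:ℝ)^(k:ℕ) * g v := by
  have hσ : (Fin.cons (v k) (fun j => v (k.succAbove j)) : Fin (m+1) → _) =
      v ∘ ⇑(Fin.cycleRange k)⁻¹ := by
    funext p
    refine Fin.cases ?_ (fun j => ?_) p
    · simp [Equiv.Perm.inv_def, Equiv.symm_apply_eq, Fin.cycleRange_self]
    · simp [Equiv.Perm.inv_def, Equiv.symm_apply_eq, Fin.cycleRange_succAbove]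
  rw [hσ, g.map_perm]
  simp [Fin.sign_cycleRange, Units.smul_def]

theorem derivConsKey' {n m : ℕ}
    (u : EuclideanSpace ℝ (Fin n) → AlternatingMap ℝ (EuclideanSpace ℝ (Fin n)) ℝ (Fin (m+1)))
    (hu : ∀ v : Fin (m + 1) → EuclideanSpace ℝ (Fin n), ContDiff ℝ 1 fun z => u z v)
    (a x : EuclideanSpace ℝ (Fin n)) (t : ℝ) (w : Fin m → EuclideanSpace ℝ (Fin n)) :
    ∃ L : EuclideanSpace ℝ (Fin n) →L[ℝ] ℝ,
      HasFDerivAt (fun z => u (a + t • (z - a)) (Fin.cons (z - a) w)) L x ∧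
      ∀ h, L h = u (a + t • (x - a)) (Fin.cons h w) +
        t * fderiv ℝ (fun z => u z (Fin.cons (x - a) w)) (a + t • (x - a)) h := by
  classical
  have hd : ∀ (ω : Fin (m+1) → EuclideanSpace ℝ (Fin n)) (p : EuclideanSpace ℝ (Fin n)),
      DifferentiableAt ℝ (fun z => u z ω) p :=
    fun ω p => ((hu ω).differentiable one_ne_zero) p
  set y := a + t • (x - a) with hy
  set b : Fin n → EuclideanSpace ℝ (Fin n) := fun i => EuclideanSpace.single i (1:ℝ) with hb
  set G : Fin n → EuclideanSpace ℝ (Fin n) → ℝ := fun i z => u z (Fin.cons (b i) w) with hG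
  set D : Fin n → (EuclideanSpace ℝ (Fin n) →L[ℝ] ℝ) := fun i => fderiv ℝ (G i) y with hD
  have hφ : HasFDerivAt (fun z : EuclideanSpace ℝ (Fin n) => a + t • (z - a))
      (t • ContinuousLinearMap.id ℝ (EuclideanSpace ℝ (Fin n))) x :=
    (((hasFDerivAt_id x).sub_const a).const_smul t).const_add a
  have hGi : ∀ i, HasFDerivAt (fun z => G i (a + t • (z - a)))
      ((D i).comp (t • ContinuousLinearMap.id ℝ (EuclideanSpace ℝ (Fin n)))) x := fun i =>
    HasFDerivAt.comp (g := G i) x ((hd (Fin.cons (b i) w) y).hasFDerivAt) hφ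
  have hcoord : ∀ i : Fin n, HasFDerivAt (fun z : EuclideanSpace ℝ (Fin n) => z i - a i)
      (EuclideanSpace.proj i : EuclideanSpace ℝ (Fin n) →L[ℝ] ℝ) x :=
    fun i =>
      ((EuclideanSpace.proj i : EuclideanSpace ℝ (Fin n) →L[ℝ] ℝ).hasFDerivAt (x := x)).sub_const
        (a i)
  have hF : HasFDerivAt (fun z => u (a + t • (z - a)) (Fin.cons (z - a) w))
      (∑ i, ((x i - a i) • ((D i).comp (t • ContinuousLinearMap.id ℝ (EuclideanSpace ℝ (Fin n))))
        + G i y • (EuclideanSpace.proj i : EuclideanSpace ℝ (Fin n) →L[ℝ] ℝ))) x := by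
    have h1 : (fun z => u (a + t • (z - a)) (Fin.cons (z - a) w))
        = fun z => ∑ i, (z i - a i) * G i (a + t • (z - a)) := by
      funext z
      rw [consLin']
      refine Finset.sum_congr rfl fun i _ => ?_
      congr 1
    rw [h1]
    exact HasFDerivAt.fun_sum fun i _ => (hcoord i).fun_mul (hGi i)
  have hDval : fderiv ℝ (fun z => u z (Fin.cons (x - a) w)) y = ∑ i, (x i - a i) • D i := by
    have h2 : (fun z => u z (Fin.cons (x - a) w)) = fun z => ∑ i, (x i - a i) * G i z := by
      funext z
      rw [consLin']
      refine Finset.sum_congr rfl fun i _ => ?_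
      congr 1
    rw [h2]
    exact (HasFDerivAt.fun_sum fun i (_ : i ∈ Finset.univ) =>
      ((hd (Fin.cons (b i) w) y).hasFDerivAt.const_mul (x i - a i))).fderiv
  refine ⟨_, hF, fun h => ?_⟩
  rw [hDval]
  have hc : u y (Fin.cons h w) = ∑ i, h i * G i y := consLin' (u y) w h
  rw [hc]
  simp only [ContinuousLinearMap.sum_apply, ContinuousLinearMap.add_apply,
    ContinuousLinearMap.smul_apply, ContinuousLinearMap.comp_apply,
    ContinuousLinearMap.id_apply, _root_.map_smul, smul_eq_mul, Finset.mul_sum]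
  rw [Finset.sum_add_distrib, add_comm]
  congr 1
  · exact Finset.sum_congr rfl fun i _ => mul_comm (G i y) (h i)
  · exact Finset.sum_congr rfl fun i _ => by ring


/-- Evaluation of the exterior derivative of an `m`-form (given as a function into
evaluations) at `x` on the `(m+1)`-tuple `v`:
`du(x)(v₀,…,v_m) = Σ_k (−1)^k (Du(x)v_k)(v₀,…,v̂_k,…,v_m)`,
where the Fréchet derivative is taken of the scalar-valued evaluations. -/
def extD {n m : ℕ} (u : EuclideanSpace ℝ (Fin n) → (Fin m → EuclideanSpace ℝ (Fin n)) → ℝ)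
    (x : EuclideanSpace ℝ (Fin n)) (v : Fin (m + 1) → EuclideanSpace ℝ (Fin n)) : ℝ :=
  ∑ k : Fin (m + 1),
    (-1 : ℝ) ^ (k : ℕ) * fderiv ℝ (fun z => u z fun j => v (k.succAbove j)) x (v k)

/-- Cartan's formula for the dilation flow with center `a`, evaluated on an arbitrary
tuple of vectors `v`:
`d/dt [t^ℓ u(a+t(x−a))] = (d w_t)(x) + t^ℓ (x−a) ⌟ (du)(a+t(x−a))`,
where `w_t(z) = t^{ℓ−1} (z−a) ⌟ u(a+t(z−a))` and `ℓ = m+1`. -/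
theorem stmt6 {n m : ℕ} (hmn : m + 1 ≤ n)
    (u : EuclideanSpace ℝ (Fin n) →
      AlternatingMap ℝ (EuclideanSpace ℝ (Fin n)) ℝ (Fin (m + 1)))
    (hu : ∀ v : Fin (m + 1) → EuclideanSpace ℝ (Fin n), ContDiff ℝ 1 fun z => u z v)
    (a x : EuclideanSpace ℝ (Fin n)) (t : ℝ)
    (v : Fin (m + 1) → EuclideanSpace ℝ (Fin n)) :
    HasDerivAt (fun s : ℝ => s ^ (m + 1) * u (a + s • (x - a)) v)
      (extD (fun z w => t ^ m * u (a + t • (z - a)) (Fin.cons (z - a) w)) x v +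
        t ^ (m + 1) * extD (fun z w => u z w) (a + t • (x - a)) (Fin.cons (x - a) v)) t := by
  classical
  have hd : ∀ (ω : Fin (m+1) → EuclideanSpace ℝ (Fin n)) (p : EuclideanSpace ℝ (Fin n)),
      DifferentiableAt ℝ (fun z => u z ω) p :=
    fun ω p => ((hu ω).differentiable one_ne_zero) p
  set y := a + t • (x - a) with hy
  set Dv : ℝ := fderiv ℝ (fun z => u z v) y (x - a) with hDv
  set D : Fin (m+1) → ℝ := fun k =>
    fderiv ℝ (fun z => u z (Fin.cons (x - a) (fun j => v (k.succAbove j)))) y (v k) with hDdef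
  -- step 1
  have hw : extD (fun z w => t ^ m * u (a + t • (z - a)) (Fin.cons (z - a) w)) x v
      = ∑ k : Fin (m+1), (-1:ℝ)^(k:ℕ) *
          (t^m * (u y (Fin.cons (v k) (fun j => v (k.succAbove j))) + t * D k)) := by
    unfold extD
    refine Finset.sum_congr rfl fun k _ => ?_
    obtain ⟨L, hL, hLval⟩ := derivConsKey' u hu a x t (fun j => v (k.succAbove j))
    have heq : (fun z => (fun z w => t ^ m * u (a + t • (z - a)) (Fin.cons (z - a) w)) z
        fun j => v (k.succAbove j))
        = fun z => t ^ m * u (a + t • (z - a)) (Fin.cons (z - a) (fun j => v (k.succAbove j))) :=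
      rfl
    rw [heq, fderiv_const_mul hL.differentiableAt (t^m), hL.fderiv]
    simp only [ContinuousLinearMap.smul_apply, smul_eq_mul]
    rw [hLval]
  -- step 2
  have hdu : extD (fun z w => u z w) y (Fin.cons (x - a) v)
      = Dv + ∑ k : Fin (m+1), (-1:ℝ)^((k:ℕ)+1) * D k := by
    unfold extD
    rw [Fin.sum_univ_succ]
    congr 1
    · have h0 : (fun j : Fin (m+1) =>
          (Fin.cons (x - a) v : Fin (m+2) → EuclideanSpace ℝ (Fin n))
            ((0 : Fin (m+2)).succAbove j)) = v := by
        funext j; rw [Fin.zero_succAbove, Fin.cons_succ]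
      simp only [h0, Fin.cons_zero, Fin.val_zero, pow_zero, one_mul]
      rfl
    · refine Finset.sum_congr rfl fun k _ => ?_
      have htup : (fun j : Fin (m+1) =>
          (Fin.cons (x - a) v : Fin (m+2) → EuclideanSpace ℝ (Fin n))
            ((Fin.succ k).succAbove j))
          = (Fin.cons (x - a) (fun j => v (k.succAbove j)) : Fin (m+1) → _) := by
        funext j
        refine Fin.cases ?_ (fun i => ?_) j
        · rw [Fin.succ_succAbove_zero, Fin.cons_zero, Fin.cons_zero]
        · rw [Fin.succ_succAbove_succ, Fin.cons_succ, Fin.cons_succ]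
      simp only [htup, Fin.cons_succ, Fin.val_succ]
      rfl
  rw [hw, hdu]
  -- step 3: simplify the value
  have hsum1 : ∀ k : Fin (m+1), (-1:ℝ)^(k:ℕ) *
      (t^m * (u y (Fin.cons (v k) (fun j => v (k.succAbove j))) + t * D k))
      = t^m * u y v + t^(m+1) * ((-1:ℝ)^(k:ℕ) * D k) := by
    intro k
    rw [permFact']
    have h2 : (-1:ℝ)^(k:ℕ) * (-1:ℝ)^(k:ℕ) = 1 := by
      rw [← pow_add]; exact Even.neg_one_pow ⟨k, rfl⟩
    linear_combination t^m * (u y v) * h2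
  rw [Finset.sum_congr rfl fun k _ => hsum1 k]
  have hsum2 : ∀ k : Fin (m+1), (-1:ℝ)^((k:ℕ)+1) * D k = -((-1:ℝ)^(k:ℕ) * D k) := by
    intro k; ring
  rw [Finset.sum_congr rfl fun k _ => hsum2 k]
  rw [Finset.sum_add_distrib, Finset.sum_const, Finset.card_univ, Fintype.card_fin,
    ← Finset.mul_sum, Finset.sum_neg_distrib]
  set S : ℝ := ∑ k : Fin (m+1), (-1:ℝ)^(k:ℕ) * D k with hS
  -- now goal : HasDerivAt f ((m+1) • (t^m * u y v) + t^(m+1) * S + t^(m+1) * (Dv + -S)) t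
  have hψ : HasDerivAt (fun s : ℝ => a + s • (x - a)) (x - a) t := by
    simpa using ((hasDerivAt_id t).smul_const (x - a)).const_add a
  have h1 : HasDerivAt (fun s : ℝ => s ^ (m+1)) ((↑(m+1) : ℝ) * t^m) t := by
    simpa using hasDerivAt_pow (m+1) t
  have h2 : HasDerivAt (fun s : ℝ => u (a + s • (x - a)) v) Dv t :=
    HasFDerivAt.comp_hasDerivAt (l := fun z => u z v) t (hd v y).hasFDerivAt hψ
  have H := h1.fun_mul h2
  refine H.congr_deriv ?_
  push_cast [nsmul_eq_mul]
  ring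
end
end

section
/- The Bogovskiĭ-type operator is a pseudodifferential operator of order −1: let j, ℓ ∈ {1,…,n} and define k₀(x,z) = z_j ∫₀¹ s^{n−ℓ}(s+1)^{ℓ−1} θ(x+sz) ds and k₁(x,z) = z_j ∫₁^∞ s^{n−ℓ}(s+1)^{ℓ−1} θ(x+sz) ds for x, z ∈ ℝⁿ. Then: (i) k₀ is C^∞ on ℝⁿ × ℝⁿ; (ii) for each x ∈ ℝⁿ the function z ↦ k₁(x,z) is Lebesgue integrable on ℝⁿ, so its Fourier transform in z, k̂₁(x,ξ) = ∫_{ℝⁿ} e^{−i⟨ξ,z⟩} k₁(x,z) dz, is well defined; (iii) for every f ∈ C_c^∞(ℝⁿ) and every x ∈ ℝⁿ, ∫_{ℝⁿ} G_ℓ(x,y)(x_j − y_j) f(y) dy = ∫_{ℝⁿ} k₀(x, x−y) f(y) dy + (2π)^{−n} ∫_{ℝⁿ} e^{i⟨ξ,x⟩} k̂₁(x,ξ) f̂(ξ) dξ, where f̂(ξ) = ∫ e^{−i⟨ξ,y⟩} f(y) dy; here G_ℓ(x,y)(x_j − y_j) = k₀(x,x−y) + k₁(x,x−y). -/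
open MeasureTheory Set Metric FourierTransform
open scoped Real RealInnerProductSpace

noncomputable section

/-- `k₀(x,z) = z_j ∫₀¹ s^{n−ℓ}(s+1)^{ℓ−1} θ(x+sz) ds`. -/
def kzero {n : ℕ} (θ : EuclideanSpace ℝ (Fin n) → ℝ) (ℓ : ℕ) (j : Fin n)
    (x z : EuclideanSpace ℝ (Fin n)) : ℝ :=
  z j * ∫ s in (0 : ℝ)..1, s ^ (n - ℓ) * (s + 1) ^ (ℓ - 1) * θ (x + s • z)

/-- `k₁(x,z) = z_j ∫₁^∞ s^{n−ℓ}(s+1)^{ℓ−1} θ(x+sz) ds`. -/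
def kone {n : ℕ} (θ : EuclideanSpace ℝ (Fin n) → ℝ) (ℓ : ℕ) (j : Fin n)
    (x z : EuclideanSpace ℝ (Fin n)) : ℝ :=
  z j * ∫ s in Set.Ioi (1 : ℝ), s ^ (n - ℓ) * (s + 1) ^ (ℓ - 1) * θ (x + s • z)

/-- The Fourier transform of `k₁(x,·)`:  `k̂₁(x,ξ) = ∫ e^{−i⟨ξ,z⟩} k₁(x,z) dz`. -/
def koneHat {n : ℕ} (θ : EuclideanSpace ℝ (Fin n) → ℝ) (ℓ : ℕ) (j : Fin n)
    (x ξ : EuclideanSpace ℝ (Fin n)) : ℂ :=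
  ∫ z : EuclideanSpace ℝ (Fin n),
    Complex.exp (-Complex.I * ((⟪ξ, z⟫ : ℝ) : ℂ)) * ((kone θ ℓ j x z : ℝ) : ℂ)

/-! ### Auxiliary lemmas -/


private lemma contDiff_param_aux {E : Type} [NormedAddCommGroup E] [NormedSpace ℝ E]
    [FiniteDimensional ℝ E] :
    ∀ (N : ℕ) {F : Type} [NormedAddCommGroup F] [NormedSpace ℝ F] [CompleteSpace F]
    (f : E × ℝ → F), ContDiff ℝ (⊤ : ℕ∞) f →
      ContDiff ℝ (N : ℕ∞) (fun x : E => ∫ s in (0:ℝ)..1, f (x, s)) := by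
  intro N
  induction N with
  | zero =>
    intro F _ _ _ f hf
    rw [show ((((0:ℕ) : ℕ∞)) : WithTop ℕ∞) = 0 by norm_cast, contDiff_zero]
    exact intervalIntegral.continuous_parametric_intervalIntegral_of_continuous'
      (μ := volume) (f := fun x s => f (x, s)) (by exact hf.continuous) 0 1
  | succ N ih =>
    intro F _ _ _ f hf
    set D : E × ℝ → (E →L[ℝ] F) := fun p =>
      ((ContinuousLinearMap.compL ℝ E (E × ℝ) F).flip (ContinuousLinearMap.inl ℝ E ℝ))
        (fderiv ℝ f p) with hD
    have hDsmooth : ContDiff ℝ (⊤ : ℕ∞) D := by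
      apply (ContinuousLinearMap.compL ℝ E (E × ℝ) F).flip
        (ContinuousLinearMap.inl ℝ E ℝ) |>.contDiff.comp
      exact hf.fderiv_right (m := ((⊤ : ℕ∞) : WithTop ℕ∞)) (by exact le_rfl)
    have hdiff : ∀ (x : E) (s : ℝ), HasFDerivAt (fun x => f (x, s)) (D (x, s)) x := by
      intro x s
      have h1 : HasFDerivAt f (fderiv ℝ f (x, s)) (x, s) :=
        (hf.differentiable (by simp) (x, s)).hasFDerivAt
      have h2 : HasFDerivAt (fun x : E => (x, s)) (ContinuousLinearMap.inl ℝ E ℝ) x :=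
        hasFDerivAt_prodMk_left x s
      exact h1.comp x h2
    have key : ∀ x₀ : E, HasFDerivAt (fun x => ∫ s in (0:ℝ)..1, f (x, s))
        (∫ s in (0:ℝ)..1, D (x₀, s)) x₀ := by
      intro x₀
      haveI : SecondCountableTopologyEither ℝ (E →L[ℝ] F) :=
        secondCountableTopologyEither_of_left ℝ (E →L[ℝ] F)
      obtain ⟨C, hC⟩ : ∃ C, ∀ p ∈ (closedBall x₀ 1) ×ˢ (uIcc (0:ℝ) 1), ‖D p‖ ≤ C :=
        ((isCompact_closedBall x₀ 1).prod isCompact_uIcc).exists_bound_of_continuousOn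
          hDsmooth.continuous.continuousOn
      apply intervalIntegral.hasFDerivAt_integral_of_dominated_of_fderiv_le
        (F := fun x s => f (x, s)) (F' := fun x s => D (x, s)) (bound := fun _ => C)
        (s := ball x₀ 1) (ball_mem_nhds x₀ one_pos)
      · filter_upwards with x
        exact (hf.continuous.comp (Continuous.prodMk_right x)).aestronglyMeasurable
      · exact (hf.continuous.comp (Continuous.prodMk_right x₀)).intervalIntegrable 0 1
      · exact (hDsmooth.continuous.comp (Continuous.prodMk_right x₀)).aestronglyMeasurable
      · filter_upwards with t ht x hx
        exact hC (x, t) ⟨ball_subset_closedBall hx, uIoc_subset_uIcc ht⟩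
      · exact intervalIntegrable_const
      · filter_upwards with t ht x hx
        exact hdiff x t
    have hfd : (fderiv ℝ (fun x => ∫ s in (0:ℝ)..1, f (x, s)))
        = fun x₀ => ∫ s in (0:ℝ)..1, D (x₀, s) := by
      ext1 x₀
      exact (key x₀).fderiv
    rw [show (((N + 1 : ℕ) : ℕ∞) : WithTop ℕ∞) = (((N : ℕ∞) : WithTop ℕ∞) + 1) by push_cast; rfl]
    rw [contDiff_succ_iff_fderiv]
    refine ⟨fun x₀ => (key x₀).differentiableAt, by simp, ?_⟩
    rw [hfd]
    exact ih D hDsmooth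

lemma contDiff_param {E : Type} [NormedAddCommGroup E] [NormedSpace ℝ E]
    [FiniteDimensional ℝ E] {F : Type} [NormedAddCommGroup F] [NormedSpace ℝ F] [CompleteSpace F]
    (f : E × ℝ → F) (hf : ContDiff ℝ (⊤ : ℕ∞) f) :
    ContDiff ℝ (⊤ : ℕ∞) (fun x : E => ∫ s in (0:ℝ)..1, f (x, s)) :=
  contDiff_infty.2 fun N => contDiff_param_aux N f hf

/-! ### Basic helpers -/

lemma exists_radius {n : ℕ} {θ : EuclideanSpace ℝ (Fin n) → ℝ} (hθc : HasCompactSupport θ) :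
    ∃ R : ℝ, 0 ≤ R ∧ ∀ v, R < ‖v‖ → θ v = 0 := by
  obtain ⟨r, hr⟩ := hθc.isBounded.subset_closedBall 0
  refine ⟨max r 0, le_max_right _ _, fun v hv => ?_⟩
  by_contra h
  have h1 : v ∈ tsupport θ := subset_tsupport θ (Function.mem_support.2 h)
  have h2 := hr h1
  simp only [Metric.mem_closedBall, dist_zero_right] at h2
  have := le_trans h2 (le_max_left r 0)
  linarith

lemma abs_coord_le {n : ℕ} (z : EuclideanSpace ℝ (Fin n)) (j : Fin n) : |z j| ≤ ‖z‖ := by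
  rw [EuclideanSpace.norm_eq]
  have h1 : |z j| = Real.sqrt (‖z j‖ ^ 2) := by
    rw [Real.sqrt_sq_eq_abs, Real.norm_eq_abs, abs_abs]
  rw [h1]
  apply Real.sqrt_le_sqrt
  exact Finset.single_le_sum (f := fun i => ‖z i‖ ^ 2)
    (fun i _ => by positivity) (Finset.mem_univ j)

lemma theta_zero {n : ℕ} {θ : EuclideanSpace ℝ (Fin n) → ℝ} {R : ℝ}
    (hRθ : ∀ v, R < ‖v‖ → θ v = 0) {x z : EuclideanSpace ℝ (Fin n)} {s : ℝ}
    (h : R + ‖x‖ < |s| * ‖z‖) : θ (x + s • z) = 0 := by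
  apply hRθ
  have h1 : ‖s • z‖ = |s| * ‖z‖ := by rw [norm_smul, Real.norm_eq_abs]
  have h2 : ‖s • z‖ ≤ ‖x + s • z‖ + ‖x‖ := by
    calc ‖s • z‖ = ‖(x + s • z) - x‖ := by rw [add_sub_cancel_left]
    _ ≤ ‖x + s • z‖ + ‖x‖ := norm_sub_le _ _
  linarith

/-- joint continuity of the integrand (in `(z, s)`). -/
lemma phi_cont {n : ℕ} {θ : EuclideanSpace ℝ (Fin n) → ℝ} (hθ : Continuous θ)
    (k₁ k₂ : ℕ) (x : EuclideanSpace ℝ (Fin n)) (j : Fin n) :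
    Continuous (fun p : EuclideanSpace ℝ (Fin n) × ℝ =>
      p.1 j * (p.2 ^ k₁ * (p.2 + 1) ^ k₂ * θ (x + p.2 • p.1))) := by
  apply Continuous.mul
  · exact (EuclideanSpace.proj j).continuous.comp continuous_fst
  · exact ((continuous_snd.pow k₁).mul ((continuous_snd.add continuous_const).pow k₂)).mul
      (hθ.comp (continuous_const.add (continuous_snd.smul continuous_fst)))

lemma gcont {n : ℕ} {θ : EuclideanSpace ℝ (Fin n) → ℝ} (hθ : Continuous θ)
    (k₁ k₂ : ℕ) (x z : EuclideanSpace ℝ (Fin n)) :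
    Continuous (fun s : ℝ => s ^ k₁ * (s + 1) ^ k₂ * θ (x + s • z)) :=
  ((continuous_id.pow k₁).mul ((continuous_id.add continuous_const).pow k₂)).mul
    (hθ.comp (continuous_const.add (continuous_id.smul continuous_const)))

/-- for fixed `s` with `1 ≤ |s|`, compact support in `z`. -/
lemma hcs_z {n : ℕ} {θ : EuclideanSpace ℝ (Fin n) → ℝ} {R : ℝ} (hR : 0 ≤ R)
    (hRθ : ∀ v, R < ‖v‖ → θ v = 0) (x : EuclideanSpace ℝ (Fin n)) (j : Fin n)
    (k₁ k₂ : ℕ) {s : ℝ} (hs : 1 ≤ |s|) :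
    HasCompactSupport (fun z : EuclideanSpace ℝ (Fin n) =>
      z j * (s ^ k₁ * (s + 1) ^ k₂ * θ (x + s • z))) := by
  apply HasCompactSupport.intro (isCompact_closedBall (0 : EuclideanSpace ℝ (Fin n)) (R + ‖x‖))
  intro z hz
  simp only [Metric.mem_closedBall, dist_zero_right, not_le] at hz
  have hz0 : (0:ℝ) ≤ ‖z‖ := norm_nonneg _
  have : R + ‖x‖ < |s| * ‖z‖ := by nlinarith
  rw [theta_zero hRθ this, mul_zero, mul_zero]

/-- for fixed `z ≠ 0`, compact support in `s`. -/
lemma hcs_s {n : ℕ} {θ : EuclideanSpace ℝ (Fin n) → ℝ} {R : ℝ} (hR : 0 ≤ R)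
    (hRθ : ∀ v, R < ‖v‖ → θ v = 0) (x : EuclideanSpace ℝ (Fin n))
    (k₁ k₂ : ℕ) {z : EuclideanSpace ℝ (Fin n)} (hz : z ≠ 0) :
    HasCompactSupport (fun s : ℝ => s ^ k₁ * (s + 1) ^ k₂ * θ (x + s • z)) := by
  have hz0 : (0:ℝ) < ‖z‖ := norm_pos_iff.2 hz
  apply HasCompactSupport.intro (isCompact_closedBall (0 : ℝ) ((R + ‖x‖) / ‖z‖))
  intro s hs
  simp only [Metric.mem_closedBall, dist_zero_right, Real.norm_eq_abs, not_le] at hs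
  have : R + ‖x‖ < |s| * ‖z‖ := by
    rw [div_lt_iff₀ hz0] at hs; linarith
  rw [theta_zero hRθ this, mul_zero]


/-! ### The splitting (part iv) -/


lemma splitting {n : ℕ} (θ : EuclideanSpace ℝ (Fin n) → ℝ) (hθ : Continuous θ)
    (hθc : HasCompactSupport θ) (ℓ : ℕ) (j : Fin n)
    (x y : EuclideanSpace ℝ (Fin n)) :
    Gker θ ℓ x y * (x j - y j) = kzero θ ℓ j x (x - y) + kone θ ℓ j x (x - y) := by
  obtain ⟨R, hR, hRθ⟩ := exists_radius hθc
  by_cases hz : x - y = 0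
  · have hxy : x j = y j := by
      have : (x - y) j = 0 := by rw [hz]; rfl
      have h2 : x j - y j = 0 := this
      linarith
    simp [kzero, kone, hz, hxy, sub_self]
  · set z := x - y with hzdef
    have key : ∀ s : ℝ, y + (s + 1) • (x - y) = x + s • (x - y) := by
      intro s; module
    have step1 : Gker θ ℓ x y
        = ∫ s in Set.Ioi (0:ℝ), s ^ (n - ℓ) * (s + 1) ^ (ℓ - 1) * θ (x + s • z) := by
      rw [Gker]
      have hmp := (measurePreserving_add_right (volume : Measure ℝ) 1).setIntegral_preimage_emb
        (measurableEmbedding_addRight 1)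
        (fun t => (t - 1) ^ (n - ℓ) * t ^ (ℓ - 1) * θ (y + t • (x - y))) (Set.Ioi 1)
      have hpre : (fun s : ℝ => s + 1) ⁻¹' (Set.Ioi 1) = Set.Ioi 0 := by
        ext s; simp
      rw [← hmp, hpre]
      apply setIntegral_congr_fun measurableSet_Ioi
      intro s _
      simp only [add_sub_cancel_right]
      rw [key s]
    have hIoc : IntegrableOn
        (fun s : ℝ => s ^ (n - ℓ) * (s + 1) ^ (ℓ - 1) * θ (x + s • z)) (Ioc (0:ℝ) 1) :=
      (gcont hθ _ _ x z).integrableOn_Ioc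
    have hIoi : IntegrableOn
        (fun s : ℝ => s ^ (n - ℓ) * (s + 1) ^ (ℓ - 1) * θ (x + s • z)) (Ioi (1:ℝ)) :=
      ((gcont hθ _ _ x z).integrable_of_hasCompactSupport
        (hcs_s hR hRθ x _ _ hz)).integrableOn
    have step2 : (∫ s in Set.Ioi (0:ℝ), s ^ (n - ℓ) * (s + 1) ^ (ℓ - 1) * θ (x + s • z))
        = (∫ s in (0:ℝ)..1, s ^ (n - ℓ) * (s + 1) ^ (ℓ - 1) * θ (x + s • z))
          + ∫ s in Set.Ioi (1:ℝ), s ^ (n - ℓ) * (s + 1) ^ (ℓ - 1) * θ (x + s • z) := by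
      rw [intervalIntegral.integral_of_le zero_le_one,
        ← setIntegral_union (Set.Ioc_disjoint_Ioi le_rfl) measurableSet_Ioi hIoc hIoi,
        Set.Ioc_union_Ioi_eq_Ioi zero_le_one]
    have hcoord : x j - y j = z j := rfl
    rw [step1, step2, hcoord, kzero, kone]
    ring

/-! ### Part (ii): integrability of `k₁(x, ·)` -/

lemma kone_integrable {n : ℕ} (hn : 1 ≤ n) (θ : EuclideanSpace ℝ (Fin n) → ℝ)
    (hθ : Continuous θ) (hθc : HasCompactSupport θ)
    (ℓ : ℕ) (hℓ1 : 1 ≤ ℓ) (hℓn : ℓ ≤ n) (j : Fin n) (x : EuclideanSpace ℝ (Fin n)) :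
    Integrable (fun z => kone θ ℓ j x z) := by
  obtain ⟨R, hR, hRθ⟩ := exists_radius hθc
  set Φ : EuclideanSpace ℝ (Fin n) × ℝ → ℝ := fun p =>
    p.1 j * (p.2 ^ (n - ℓ) * (p.2 + 1) ^ (ℓ - 1) * θ (x + p.2 • p.1)) with hΦdef
  have hΦcont : Continuous Φ := phi_cont hθ _ _ x j
  set ν : Measure ℝ := volume.restrict (Set.Ioi (1:ℝ)) with hν
  -- the comparison function ψ
  set ψ : EuclideanSpace ℝ (Fin n) → ℝ := fun w => ‖w‖ * |θ (x + w)| with hψdef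
  have hψc : Continuous ψ := continuous_norm.mul ((hθ.comp (continuous_const.add continuous_id)).abs)
  have hψsupp : HasCompactSupport ψ := by
    apply HasCompactSupport.intro (isCompact_closedBall (0 : EuclideanSpace ℝ (Fin n)) (R + ‖x‖))
    intro w hw
    simp only [Metric.mem_closedBall, dist_zero_right, not_le] at hw
    have h2 : ‖w‖ ≤ ‖x + w‖ + ‖x‖ := by
      calc ‖w‖ = ‖(x + w) - x‖ := by rw [add_sub_cancel_left]
      _ ≤ ‖x + w‖ + ‖x‖ := norm_sub_le _ _
    have : R < ‖x + w‖ := by linarith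
    simp [hψdef, hRθ _ this]
  have hψint : Integrable ψ := hψc.integrable_of_hasCompactSupport hψsupp
  set A : ℝ := ∫ w, ψ w with hA
  have hA0 : 0 ≤ A := integral_nonneg fun w => mul_nonneg (norm_nonneg _) (abs_nonneg _)
  -- integrability of Φ on the product
  have hprod : Integrable Φ ((volume : Measure (EuclideanSpace ℝ (Fin n))).prod ν) := by
    rw [integrable_prod_iff' hΦcont.aestronglyMeasurable]
    constructor
    · rw [hν, ae_restrict_iff' measurableSet_Ioi]
      filter_upwards with s hs
      have hs1 : (1:ℝ) ≤ |s| := by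
        rw [Set.mem_Ioi] at hs
        rw [abs_of_pos (by linarith)]; linarith
      exact (hΦcont.comp (Continuous.prodMk_left s)).integrable_of_hasCompactSupport
        (hcs_z hR hRθ x j _ _ hs1)
    · apply Integrable.mono' (g := fun s => (2 ^ n * A) * (s ^ 2)⁻¹)
      · have h1 : IntegrableOn (fun s : ℝ => s ^ (-2 : ℝ)) (Set.Ioi (1:ℝ)) :=
          integrableOn_Ioi_rpow_of_lt (by norm_num) one_pos
        have h2 : IntegrableOn (fun s : ℝ => (s ^ 2)⁻¹) (Set.Ioi (1:ℝ)) := by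
          apply h1.congr_fun _ measurableSet_Ioi
          intro s hs
          rw [Set.mem_Ioi] at hs
          show s ^ (-2 : ℝ) = (s ^ 2)⁻¹
          rw [Real.rpow_neg (by linarith), show ((2:ℝ)) = ((2:ℕ):ℝ) by norm_num,
            Real.rpow_natCast]
        exact h2.const_mul _
      · exact (hΦcont.norm.stronglyMeasurable.integral_prod_left').aestronglyMeasurable
      · rw [hν, ae_restrict_iff' measurableSet_Ioi]
        filter_upwards with s hs
        rw [Set.mem_Ioi] at hs
        have hs0 : (0:ℝ) < s := by linarith
        set g : ℝ := s ^ (n - ℓ) * (s + 1) ^ (ℓ - 1) with hg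
        have hg0 : 0 ≤ g := by positivity
        -- pointwise bound
        have h1 : ∀ z : EuclideanSpace ℝ (Fin n), ‖Φ (z, s)‖ ≤ g * (s⁻¹ * ψ (s • z)) := by
          intro z
          have e1 : ψ (s • z) = s * ‖z‖ * |θ (x + s • z)| := by
            show ‖s • z‖ * |θ (x + s • z)| = s * ‖z‖ * |θ (x + s • z)|
            rw [norm_smul, Real.norm_eq_abs, abs_of_pos hs0]
          have e2 : ‖Φ (z, s)‖ = |z j| * (g * |θ (x + s • z)|) := by
            show |z j * (s ^ (n - ℓ) * (s + 1) ^ (ℓ - 1) * θ (x + s • z))|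
              = |z j| * (g * |θ (x + s • z)|)
            rw [← hg, abs_mul, abs_mul, abs_of_nonneg hg0]
          rw [e1, e2]
          have h3 : |z j| ≤ ‖z‖ := abs_coord_le z j
          have h4 : (0:ℝ) ≤ |θ (x + s • z)| := abs_nonneg _
          calc |z j| * (g * |θ (x + s • z)|) ≤ ‖z‖ * (g * |θ (x + s • z)|) := by
                apply mul_le_mul_of_nonneg_right h3 (by positivity)
          _ = g * (s⁻¹ * (s * ‖z‖ * |θ (x + s • z)|)) := by
                field_simp
        have h2 : Integrable (fun z : EuclideanSpace ℝ (Fin n) => g * (s⁻¹ * ψ (s • z))) :=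
          ((hψint.comp_smul (ne_of_gt hs0)).const_mul _).const_mul _
        have h5 : (∫ z : EuclideanSpace ℝ (Fin n), ψ (s • z))
            = (s ^ n)⁻¹ * A := by
          rw [MeasureTheory.Measure.integral_comp_smul_of_nonneg volume ψ s (hR := hs0.le)]
          rw [smul_eq_mul, finrank_euclideanSpace_fin]
        calc ‖∫ z : EuclideanSpace ℝ (Fin n), ‖Φ (z, s)‖‖
            = ∫ z : EuclideanSpace ℝ (Fin n), ‖Φ (z, s)‖ := by
              rw [Real.norm_of_nonneg (integral_nonneg fun z => norm_nonneg _)]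
        _ ≤ ∫ z : EuclideanSpace ℝ (Fin n), g * (s⁻¹ * ψ (s • z)) := by
              apply integral_mono_of_nonneg (Filter.Eventually.of_forall fun z => norm_nonneg _)
                h2 (Filter.Eventually.of_forall h1)
        _ = g * (s⁻¹ * ((s ^ n)⁻¹ * A)) := by
              rw [integral_const_mul, integral_const_mul, h5]
        _ ≤ (2 ^ n * A) * (s ^ 2)⁻¹ := by
              -- bound g ≤ 2^n * s^(n-1) and simplify
              have hb1 : (s + 1) ^ (ℓ - 1) ≤ (2 * s) ^ (ℓ - 1) := by
                apply pow_le_pow_left₀ (by linarith) (by linarith)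
              have hb2 : g ≤ 2 ^ (ℓ - 1) * s ^ (n - 1) := by
                rw [hg]
                calc s ^ (n - ℓ) * (s + 1) ^ (ℓ - 1) ≤ s ^ (n - ℓ) * (2 * s) ^ (ℓ - 1) := by
                      apply mul_le_mul_of_nonneg_left hb1 (by positivity)
                _ = 2 ^ (ℓ - 1) * s ^ (n - 1) := by
                      rw [mul_pow, show n - 1 = n - ℓ + (ℓ - 1) by omega, pow_add]
                      ring
              have hb3 : (2:ℝ) ^ (ℓ - 1) ≤ 2 ^ n := by
                apply pow_le_pow_right₀ (by norm_num) (by omega)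
              have hgb : g ≤ 2 ^ n * s ^ (n - 1) := le_trans hb2 (by
                apply mul_le_mul_of_nonneg_right hb3 (by positivity))
              have hsn : s ^ n = s ^ (n - 1) * s := by
                conv_lhs => rw [show n = (n - 1) + 1 by omega]
                rw [pow_succ]
              have key : g * (s⁻¹ * ((s ^ n)⁻¹ * A)) ≤ (2 ^ n * s ^ (n-1)) * (s⁻¹ * ((s ^ n)⁻¹ * A)) := by
                apply mul_le_mul_of_nonneg_right hgb (by positivity)
              apply le_trans key
              rw [hsn]
              have hs1 : s ^ (n-1) > 0 := by positivity
              apply le_of_eq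
              field_simp
  -- conclude
  have hint : Integrable (fun z : EuclideanSpace ℝ (Fin n) => ∫ s, Φ (z, s) ∂ν) volume :=
    hprod.integral_prod_left
  apply hint.congr
  filter_upwards with z
  rw [hν, kone]
  exact (integral_const_mul (z j : ℝ) _)

/-! ### Part (i): smoothness of `k₀` -/

lemma kzero_smooth {n : ℕ} (θ : EuclideanSpace ℝ (Fin n) → ℝ)
    (hθ : ContDiff ℝ (⊤ : ℕ∞) θ) (ℓ : ℕ) (j : Fin n) :
    ContDiff ℝ (⊤ : ℕ∞) fun p : EuclideanSpace ℝ (Fin n) × EuclideanSpace ℝ (Fin n) =>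
      kzero θ ℓ j p.1 p.2 := by
  have h2 : ContDiff ℝ (⊤ : ℕ∞) (fun q :
      (EuclideanSpace ℝ (Fin n) × EuclideanSpace ℝ (Fin n)) × ℝ =>
      q.2 ^ (n - ℓ) * (q.2 + 1) ^ (ℓ - 1) * θ (q.1.1 + q.2 • q.1.2)) := by
    apply ContDiff.mul
    · exact (contDiff_snd.pow _).mul ((contDiff_snd.add contDiff_const).pow _)
    · exact hθ.comp ((contDiff_fst.comp contDiff_fst).add
        (contDiff_snd.smul (contDiff_snd.comp contDiff_fst)))
  have h3 := contDiff_param _ h2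
  have h1 : ContDiff ℝ (⊤ : ℕ∞)
      (fun p : EuclideanSpace ℝ (Fin n) × EuclideanSpace ℝ (Fin n) => p.2 j) := by
    exact ((EuclideanSpace.proj j).comp
      (ContinuousLinearMap.snd ℝ (EuclideanSpace ℝ (Fin n)) (EuclideanSpace ℝ (Fin n)))).contDiff
  exact h1.mul h3

/-! ### Part (iii): the Fourier identity for the `k₁` part -/

lemma kone_fourier {n : ℕ} (hn : 1 ≤ n) (θ : EuclideanSpace ℝ (Fin n) → ℝ)
    (hθ : ContDiff ℝ (⊤ : ℕ∞) θ) (hθc : HasCompactSupport θ)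
    (ℓ : ℕ) (hℓ1 : 1 ≤ ℓ) (hℓn : ℓ ≤ n) (j : Fin n)
    (f : EuclideanSpace ℝ (Fin n) → ℝ) (hf : ContDiff ℝ (⊤ : ℕ∞) f)
    (hfc : HasCompactSupport f) (x : EuclideanSpace ℝ (Fin n)) :
    ((∫ y : EuclideanSpace ℝ (Fin n), kone θ ℓ j x (x - y) * f y : ℝ) : ℂ) =
      ((((2 * Real.pi) ^ n)⁻¹ : ℝ) : ℂ) *
        ∫ ξ : EuclideanSpace ℝ (Fin n),
          Complex.exp (Complex.I * ((⟪ξ, x⟫ : ℝ) : ℂ)) * koneHat θ ℓ j x ξ *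
            ∫ y : EuclideanSpace ℝ (Fin n),
              Complex.exp (-Complex.I * ((⟪ξ, y⟫ : ℝ) : ℂ)) * ((f y : ℝ) : ℂ) := by
  have h2π : (2 * Real.pi) ≠ 0 := ne_of_gt Real.two_pi_pos
  set K : EuclideanSpace ℝ (Fin n) → ℂ := fun z => ((kone θ ℓ j x z : ℝ) : ℂ) with hKdef
  set F : EuclideanSpace ℝ (Fin n) → ℂ := fun y => ((f y : ℝ) : ℂ) with hFdef
  have hk1 : Integrable (fun z => kone θ ℓ j x z) :=
    kone_integrable hn θ hθ.continuous hθc ℓ hℓ1 hℓn j x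
  have hKint : Integrable K := hk1.ofReal
  have hFcont : Continuous F := Complex.continuous_ofReal.comp hf.continuous
  have hFc : HasCompactSupport F := hfc.comp_left (g := Complex.ofReal) Complex.ofReal_zero
  have hFint : Integrable F := hFcont.integrable_of_hasCompactSupport hFc
  have hFsmooth : ContDiff ℝ (⊤ : ℕ∞) F := Complex.ofRealCLM.contDiff.comp hf
  have hdecay : ∀ k m : ℕ, ∃ C : ℝ, ∀ y, ‖y‖ ^ k * ‖iteratedFDeriv ℝ m F y‖ ≤ C := by
    intro k m
    have hcont : Continuous fun y => ‖y‖ ^ k * ‖iteratedFDeriv ℝ m F y‖ :=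
      (continuous_norm.pow k).mul
        (hFsmooth.continuous_iteratedFDeriv (by exact_mod_cast le_top)).norm
    have hsupp : HasCompactSupport fun y => ‖y‖ ^ k * ‖iteratedFDeriv ℝ m F y‖ :=
      ((hFc.iteratedFDeriv (𝕜 := ℝ) (n := m))).norm.mul_left
    obtain ⟨C, hC⟩ := hsupp.exists_bound_of_continuous hcont
    refine ⟨C, fun y => le_trans (le_abs_self _) ?_⟩
    have := hC y
    rwa [Real.norm_eq_abs] at this
  set fS : SchwartzMap (EuclideanSpace ℝ (Fin n)) ℂ := ⟨F, hFsmooth, hdecay⟩ with hfS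
  have h𝓕Feq : ⇑(SchwartzMap.fourierTransformCLM ℂ fS) = 𝓕 F := by
    rw [SchwartzMap.fourierTransformCLM_apply]; rfl
  have h𝓕Fint : Integrable (𝓕 F) := by
    rw [← h𝓕Feq]; exact (SchwartzMap.fourierTransformCLM ℂ fS).integrable
  have h𝓕Fcont : Continuous (𝓕 F) := by
    rw [← h𝓕Feq]; exact (SchwartzMap.fourierTransformCLM ℂ fS).continuous
  have hfourinv : 𝓕⁻ (𝓕 F) = F := hFcont.fourierInv_fourier_eq hFint h𝓕Fint
  have hinv : ∀ y, F y = ∫ w, Real.fourierChar ⟪w, y⟫ • 𝓕 F w := by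
    intro y
    conv_lhs => rw [← hfourinv]
    rw [Real.fourierInv_eq]
  -- the Fourier transforms in the nonunitary normalization
  have hKhat : ∀ ξ, koneHat θ ℓ j x ξ = 𝓕 K ((2 * Real.pi)⁻¹ • ξ) := by
    intro ξ
    rw [Real.fourier_eq', koneHat]
    congr 1; funext v
    rw [smul_eq_mul]
    congr 2
    rw [real_inner_smul_right]
    have h1 : -2 * Real.pi * ((2 * Real.pi)⁻¹ * ⟪v, ξ⟫) = -⟪v, ξ⟫ := by
      field_simp <;> ring
    rw [h1, real_inner_comm v ξ]
    push_cast
    ring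
  have hFhat : ∀ ξ, (∫ y : EuclideanSpace ℝ (Fin n),
      Complex.exp (-Complex.I * ((⟪ξ, y⟫ : ℝ) : ℂ)) * F y) = 𝓕 F ((2 * Real.pi)⁻¹ • ξ) := by
    intro ξ
    rw [Real.fourier_eq']
    congr 1; funext v
    rw [smul_eq_mul]
    congr 2
    rw [real_inner_smul_right]
    have h1 : -2 * Real.pi * ((2 * Real.pi)⁻¹ * ⟪v, ξ⟫) = -⟪v, ξ⟫ := by
      field_simp <;> ring
    rw [h1, real_inner_comm v ξ]
    push_cast
    ring
  set H : EuclideanSpace ℝ (Fin n) → ℂ :=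
    fun w => (Real.fourierChar ⟪w, x⟫ : ℂ) * (𝓕 K w * 𝓕 F w) with hHdef
  have hexp : ∀ ξ : EuclideanSpace ℝ (Fin n),
      Complex.exp (Complex.I * ((⟪ξ, x⟫ : ℝ) : ℂ)) =
        (Real.fourierChar ⟪(2 * Real.pi)⁻¹ • ξ, x⟫ : ℂ) := by
    intro ξ
    rw [Real.fourierChar_apply, real_inner_smul_left]
    have h1 : 2 * Real.pi * ((2 * Real.pi)⁻¹ * ⟪ξ, x⟫) = ⟪ξ, x⟫ := by field_simp <;> ring
    rw [h1, mul_comm]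
  -- Fubini step
  have swapInt : Integrable
      (fun p : EuclideanSpace ℝ (Fin n) × EuclideanSpace ℝ (Fin n) =>
        K (x - p.1) * (Real.fourierChar ⟪p.2, p.1⟫ • 𝓕 F p.2))
      ((volume : Measure (EuclideanSpace ℝ (Fin n))).prod volume) := by
    have m1 : AEStronglyMeasurable
        (fun p : EuclideanSpace ℝ (Fin n) × EuclideanSpace ℝ (Fin n) => K (x - p.1))
        ((volume : Measure (EuclideanSpace ℝ (Fin n))).prod volume) :=
      (hKint.comp_sub_left x).aestronglyMeasurable.comp_quasiMeasurePreserving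
        MeasureTheory.Measure.quasiMeasurePreserving_fst
    have m2 : Continuous
        (fun p : EuclideanSpace ℝ (Fin n) × EuclideanSpace ℝ (Fin n) =>
          Real.fourierChar ⟪p.2, p.1⟫ • 𝓕 F p.2) :=
      (Real.continuous_fourierChar.comp (continuous_snd.inner continuous_fst)).smul
        (h𝓕Fcont.comp continuous_snd)
    apply Integrable.mono' (((hKint.comp_sub_left x).norm).mul_prod h𝓕Fint.norm)
      (m1.mul m2.aestronglyMeasurable)
    filter_upwards with p
    simp only [Pi.mul_apply]
    rw [norm_mul, Circle.norm_smul]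
  have hT : (∫ y, K (x - y) * F y) = ∫ w, H w := by
    calc ∫ y, K (x - y) * F y
        = ∫ y, K (x - y) * ∫ w, Real.fourierChar ⟪w, y⟫ • 𝓕 F w := by
          congr 1; funext y; rw [← hinv y]
      _ = ∫ y, ∫ w, K (x - y) * (Real.fourierChar ⟪w, y⟫ • 𝓕 F w) := by
          congr 1; funext y; exact (integral_const_mul _ _).symm
      _ = ∫ w, ∫ y, K (x - y) * (Real.fourierChar ⟪w, y⟫ • 𝓕 F w) :=
          integral_integral_swap swapInt
      _ = ∫ w, (∫ y, K (x - y) * (Real.fourierChar ⟪w, y⟫ : ℂ)) * 𝓕 F w := by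
          congr 1; funext w
          rw [← integral_mul_const]
          congr 1; funext y
          rw [Circle.smul_def, smul_eq_mul]; ring
      _ = ∫ w, H w := by
          congr 1; funext w
          show (∫ y, K (x - y) * (Real.fourierChar ⟪w, y⟫ : ℂ)) * 𝓕 F w
            = (Real.fourierChar ⟪w, x⟫ : ℂ) * (𝓕 K w * 𝓕 F w)
          have hsub : (∫ y, K (x - y) * (Real.fourierChar ⟪w, y⟫ : ℂ))
              = ∫ y, K y * (Real.fourierChar ⟪w, x - y⟫ : ℂ) := by
            rw [← integral_sub_left_eq_self
              (fun u => K u * (Real.fourierChar ⟪w, x - u⟫ : ℂ)) volume x]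
            congr 1; funext y; rw [sub_sub_cancel]
          rw [hsub]
          have hptw : ∀ y, K y * (Real.fourierChar ⟪w, x - y⟫ : ℂ)
              = (Real.fourierChar ⟪w, x⟫ : ℂ)
                * (Complex.exp (((-2 * Real.pi * ⟪y, w⟫ : ℝ) : ℂ) * Complex.I) * K y) := by
            intro y
            rw [inner_sub_right, Real.fourierChar_apply, Real.fourierChar_apply]
            have h1 : (((2 * Real.pi * (⟪w, x⟫ - ⟪w, y⟫) : ℝ)) : ℂ) * Complex.I
                = ((2 * Real.pi * ⟪w, x⟫ : ℝ) : ℂ) * Complex.I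
                  + ((-2 * Real.pi * ⟪y, w⟫ : ℝ) : ℂ) * Complex.I := by
              rw [real_inner_comm y w]; push_cast; ring
            rw [h1, Complex.exp_add]; ring
          have h𝓕K : 𝓕 K w = ∫ a, Complex.exp
              (((-2 * Real.pi * ⟪a, w⟫ : ℝ) : ℂ) * Complex.I) * K a := by
            rw [Real.fourier_eq']
            simp only [smul_eq_mul]
          simp_rw [hptw]
          rw [integral_const_mul, h𝓕K]
          ring
    -- done
  -- put everything together
  have hcast : ((∫ y : EuclideanSpace ℝ (Fin n), kone θ ℓ j x (x - y) * f y : ℝ) : ℂ)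
      = ∫ y, K (x - y) * F y := by
    have h1 : (∫ y, K (x - y) * F y)
        = ∫ y, ((kone θ ℓ j x (x - y) * f y : ℝ) : ℂ) := by
      congr 1; funext y; push_cast; rfl
    rw [h1]
    exact (integral_ofReal).symm
  rw [hcast, hT]
  have hscale : (∫ ξ : EuclideanSpace ℝ (Fin n),
      Complex.exp (Complex.I * ((⟪ξ, x⟫ : ℝ) : ℂ)) * koneHat θ ℓ j x ξ *
        ∫ y : EuclideanSpace ℝ (Fin n),
          Complex.exp (-Complex.I * ((⟪ξ, y⟫ : ℝ) : ℂ)) * ((f y : ℝ) : ℂ))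
      = ∫ ξ : EuclideanSpace ℝ (Fin n), H ((2 * Real.pi)⁻¹ • ξ) := by
    congr 1; funext ξ
    rw [hKhat ξ, hexp ξ, hHdef]
    have := hFhat ξ
    rw [this]
    ring
  rw [hscale]
  rw [MeasureTheory.Measure.integral_comp_inv_smul_of_nonneg volume H Real.two_pi_pos.le]
  rw [finrank_euclideanSpace_fin]
  rw [show ((2 * Real.pi) ^ n • (∫ w, H w) : ℂ) = (((2 * Real.pi) ^ n : ℝ) : ℂ) * ∫ w, H w by
    rw [← Complex.real_smul]]
  rw [← mul_assoc, ← Complex.ofReal_mul, inv_mul_cancel₀ (pow_ne_zero n h2π)]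
  simp


theorem stmt9 {n : ℕ} (hn : 1 ≤ n) (θ : EuclideanSpace ℝ (Fin n) → ℝ)
    (hθ : ContDiff ℝ (⊤ : ℕ∞) θ) (hθc : HasCompactSupport θ)
    (ℓ : ℕ) (hℓ1 : 1 ≤ ℓ) (hℓn : ℓ ≤ n) (j : Fin n) :
    -- (i)
    (ContDiff ℝ (⊤ : ℕ∞) fun p : EuclideanSpace ℝ (Fin n) × EuclideanSpace ℝ (Fin n) =>
      kzero θ ℓ j p.1 p.2) ∧
    -- (ii)
    (∀ x : EuclideanSpace ℝ (Fin n), Integrable (fun z => kone θ ℓ j x z)) ∧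
    -- (iii)
    (∀ f : EuclideanSpace ℝ (Fin n) → ℝ, ContDiff ℝ (⊤ : ℕ∞) f → HasCompactSupport f →
      ∀ x : EuclideanSpace ℝ (Fin n),
        (((∫ y : EuclideanSpace ℝ (Fin n), Gker θ ℓ x y * (x j - y j) * f y : ℝ)) : ℂ) =
          (((∫ y : EuclideanSpace ℝ (Fin n), kzero θ ℓ j x (x - y) * f y : ℝ)) : ℂ) +
            ((((2 * Real.pi) ^ n)⁻¹ : ℝ) : ℂ) *
              ∫ ξ : EuclideanSpace ℝ (Fin n),
                Complex.exp (Complex.I * ((⟪ξ, x⟫ : ℝ) : ℂ)) * koneHat θ ℓ j x ξ *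
                  ∫ y : EuclideanSpace ℝ (Fin n),
                    Complex.exp (-Complex.I * ((⟪ξ, y⟫ : ℝ) : ℂ)) * ((f y : ℝ) : ℂ)) ∧
    -- the kernel splitting
    (∀ x y : EuclideanSpace ℝ (Fin n), x ≠ y →
      Gker θ ℓ x y * (x j - y j) = kzero θ ℓ j x (x - y) + kone θ ℓ j x (x - y)) := by
  refine ⟨kzero_smooth θ hθ ℓ j,
    fun x => kone_integrable hn θ hθ.continuous hθc ℓ hℓ1 hℓn j x, ?_,
    fun x y _ => splitting θ hθ.continuous hθc ℓ j x y⟩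
  intro f hf hfc x
  have hsplit : ∀ y, Gker θ ℓ x y * (x j - y j) * f y
      = kzero θ ℓ j x (x - y) * f y + kone θ ℓ j x (x - y) * f y := by
    intro y; rw [splitting θ hθ.continuous hθc ℓ j x y]; ring
  have I0 : Integrable (fun y => kzero θ ℓ j x (x - y) * f y) := by
    apply Continuous.integrable_of_hasCompactSupport
    · exact ((kzero_smooth θ hθ ℓ j).continuous.comp
        (continuous_const.prodMk (continuous_const.sub continuous_id))).mul hf.continuous
    · exact hfc.mul_left
  have I1 : Integrable (fun y => kone θ ℓ j x (x - y) * f y) := by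
    have h1 : Integrable (fun y => kone θ ℓ j x (x - y)) :=
      (kone_integrable hn θ hθ.continuous hθc ℓ hℓ1 hℓn j x).comp_sub_left x
    have h2 : Integrable (fun y => f y * kone θ ℓ j x (x - y)) :=
      h1.bdd_mul hf.continuous.aestronglyMeasurable
        (by
          exact Filter.Eventually.of_forall (hfc.exists_bound_of_continuous hf.continuous).choose_spec)
    apply h2.congr
    filter_upwards with y
    ring
  have hreal : (∫ y, Gker θ ℓ x y * (x j - y j) * f y)
      = (∫ y, kzero θ ℓ j x (x - y) * f y) + ∫ y, kone θ ℓ j x (x - y) * f y := by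
    rw [← integral_add I0 I1]
    exact integral_congr_ae (Filter.Eventually.of_forall hsplit)
  rw [hreal, Complex.ofReal_add, kone_fourier hn θ hθ hθc ℓ hℓ1 hℓn j f hf hfc x]


end
end
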